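/- arXiv:2406.14125 — 6 statements merged into one kernel-verified Lean document; each statement's English description precedes it below -/
import Mathlib

section
/- Let t ≥ 1 and n ≥ 2t+2 be integers, and let x and x' be two distinct binary words of length n. Suppose D and D' are sets of deletion vectors for length-n words, each vector of weight at most t, with |D| = |D'| = N, such that the output set of D on x equals the output set of D' on x'. Then N ≤ V_2(n,t) − V_2(⌈n/2⌉ − 1, t). (Equivalently, if N ≥ V_2(n,t) − V_2(⌈n/2⌉−1,t) + 1 distinct deletion vectors of weight at most t are applied, the set of output words uniquely determines the transmitted binary word.) -/
/-- Applying a deletion vector `S` (a set of coordinate positions) to a word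
`x` of length `n`: delete the entries at positions in `S`, keeping the rest in order. -/
def delWord {q n : ℕ} (x : Fin n → Fin q) (S : Finset (Fin n)) : List (Fin q) :=
  ((Finset.univ \ S).sort (· ≤ ·)).map x

/-- Binary Hamming ball volume `V₂(n,t) = ∑_{i=0}^{t} C(n,i)`. -/
def V₂ (n t : ℕ) : ℕ := ∑ i ∈ Finset.range (t + 1), n.choose i


namespace DelUniq
open Finset List
open Finset List

/-- sorted sublist from subset -/
theorem sublist_of_sorted_lt {α : Type*} [Preorder α] {l₁ l₂ : List α}
    (h₁ : l₁.Pairwise (· < ·)) (h₂ : l₂.Pairwise (· < ·)) (hsub : ∀ a ∈ l₁, a ∈ l₂) :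
    l₁ <+ l₂ := by
  induction l₂ generalizing l₁ with
  | nil =>
    cases l₁ with
    | nil => exact List.Sublist.refl _
    | cons a t => exact absurd (hsub a List.mem_cons_self) List.not_mem_nil
  | cons b t₂ ih =>
    cases l₁ with
    | nil => exact List.nil_sublist _
    | cons a t₁ =>
      rcases eq_or_ne a b with rfl | hab
      · refine List.cons_sublist_cons.mpr (ih h₁.of_cons h₂.of_cons ?_)
        intro c hc
        have hac : a < c := List.rel_of_pairwise_cons h₁ hc
        have := hsub c (List.mem_cons_of_mem a hc)
        rcases List.mem_cons.mp this with rfl | h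
        · exact absurd hac (lt_irrefl _)
        · exact h
      · have hat₂ : a ∈ t₂ := by
          rcases List.mem_cons.mp (hsub a List.mem_cons_self) with rfl | h
          · exact absurd rfl hab
          · exact h
        have hba : b < a := List.rel_of_pairwise_cons h₂ hat₂
        refine List.sublist_cons_of_sublist b (ih h₁ h₂.of_cons (fun c hc => ?_))
        rcases List.mem_cons.mp (hsub c hc) with rfl | h
        · rcases List.mem_cons.mp hc with rfl | h'
          · exact absurd rfl hab
          · exact absurd (List.rel_of_pairwise_cons h₁ h') (by
              intro hlt; exact absurd (hba.trans hlt) (lt_irrefl _))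
        · exact h

variable {n : ℕ}

theorem sort_map_sublist {A B : Finset (Fin n)} (w : Fin n → Fin 2) (hAB : A ⊆ B) :
    (A.sort (· ≤ ·)).map w <+ (B.sort (· ≤ ·)).map w := by
  refine List.Sublist.map w (sublist_of_sorted_lt (Finset.sortedLT_sort A).pairwise
    (Finset.sortedLT_sort B).pairwise ?_)
  intro a ha
  rw [Finset.mem_sort] at ha ⊢
  exact hAB ha

theorem sort_append {F G : Finset (Fin n)} (hFG : ∀ f ∈ F, ∀ g ∈ G, f < g) :
    (F ∪ G).sort (· ≤ ·) = F.sort (· ≤ ·) ++ G.sort (· ≤ ·) := by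
  have hd : Disjoint F G := by
    rw [Finset.disjoint_left]
    intro a haF haG
    exact absurd (hFG a haF a haG) (lt_irrefl _)
  refine List.Perm.eq_of_pairwise' (Finset.pairwise_sort _ _) ?_ ?_
  swap
  · apply Multiset.coe_eq_coe.mp
    rw [Finset.sort_eq]
    have : (F ∪ G).1 = F.1 + G.1 := by
      rw [← Finset.disjUnion_eq_union F G hd]; rfl
    rw [this]
    rw [← Multiset.coe_add]
    rw [Finset.sort_eq, Finset.sort_eq]
  · refine List.pairwise_append.mpr ⟨Finset.pairwise_sort _ _, Finset.pairwise_sort _ _, ?_⟩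
    intro a ha b hb
    rw [Finset.mem_sort] at ha hb
    exact (hFG a ha b hb).le

theorem sort_map_const {F : Finset (Fin n)} {w : Fin n → Fin 2} {σ : Fin 2}
    (h : ∀ i ∈ F, w i = σ) : (F.sort (· ≤ ·)).map w = List.replicate F.card σ := by
  rw [List.eq_replicate_iff]
  constructor
  · rw [List.length_map, Finset.length_sort]
  · intro b hb
    rcases List.mem_map.mp hb with ⟨i, hi, rfl⟩
    exact h i (Finset.mem_sort (· ≤ ·) |>.mp hi)

open Finset List


theorem count_map_eq_card {l : List (Fin n)} (hl : l.Nodup) (w : Fin n → Fin 2) (σ : Fin 2) :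
    List.count σ (l.map w) = (l.toFinset.filter (fun i => w i = σ)).card := by
  induction l with
  | nil => simp
  | cons i t ih =>
    have hnd : t.Nodup := hl.of_cons
    have hit : i ∉ t := (List.nodup_cons.mp hl).1
    rw [List.map_cons, List.count_cons, ih hnd, List.toFinset_cons, Finset.filter_insert]
    by_cases hw : w i = σ
    · rw [if_pos hw, Finset.card_insert_of_notMem (by
        intro hmem
        exact hit (List.mem_toFinset.mp (Finset.mem_of_mem_filter i hmem)))]
      simp [hw]
    · rw [if_neg hw]
      simp [hw]

theorem noemb {y : Fin n → Fin 2} {σ τ : Fin 2} (hστ : σ ≠ τ) {a b : ℕ} {q : Fin n}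
    (hq : y q = σ)
    (ha : ((Finset.univ : Finset (Fin n)).filter (fun i => i < q ∧ y i = σ)).card < a)
    (hb : ((Finset.univ : Finset (Fin n)).filter (fun i => q < i ∧ y i = τ)).card < b) :
    ¬ ((List.replicate a σ ++ List.replicate b τ) <+
        ((Finset.univ : Finset (Fin n)).sort (· ≤ ·)).map y) := by
  intro hsub
  rw [List.append_sublist_iff] at hsub
  obtain ⟨r₁, r₂, heq, h₁, h₂⟩ := hsub
  rw [List.map_eq_append_iff] at heq
  obtain ⟨l₁, l₂, hl, hr₁, hr₂⟩ := heq
  subst hr₁ hr₂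
  have hnd : (l₁ ++ l₂).Nodup := by rw [← hl]; exact Finset.sort_nodup _ _
  have hnd₁ : l₁.Nodup := hnd.of_append_left
  have hnd₂ : l₂.Nodup := hnd.of_append_right
  have hsorted : (l₁ ++ l₂).Pairwise (· ≤ ·) := by rw [← hl]; exact Finset.pairwise_sort _ _
  have hcross : ∀ u ∈ l₁, ∀ v ∈ l₂, u ≤ v := fun u hu v hv =>
    (List.pairwise_append.mp hsorted).2.2 u hu v hv
  have hca : a ≤ (l₁.toFinset.filter (fun i => y i = σ)).card := by
    rw [← count_map_eq_card hnd₁]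
    calc a = List.count σ (List.replicate a σ) := List.count_replicate_self.symm
    _ ≤ _ := h₁.count_le σ
  have hcb : b ≤ (l₂.toFinset.filter (fun i => y i = τ)).card := by
    rw [← count_map_eq_card hnd₂]
    calc b = List.count τ (List.replicate b τ) := List.count_replicate_self.symm
    _ ≤ _ := h₂.count_le τ
  have hex : ∃ e ∈ l₁.toFinset.filter (fun i => y i = σ), q ≤ e := by
    by_contra hno
    push_neg at hno
    have hsubset : l₁.toFinset.filter (fun i => y i = σ) ⊆
        Finset.univ.filter (fun i => i < q ∧ y i = σ) := by
      intro i hi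
      exact Finset.mem_filter.mpr ⟨Finset.mem_univ _,
        hno i hi, (Finset.mem_filter.mp hi).2⟩
    exact absurd (le_trans hca (Finset.card_le_card hsubset)) (not_le.mpr ha)
  obtain ⟨e, he, hqe⟩ := hex
  have hel₁ : e ∈ l₁ := List.mem_toFinset.mp (Finset.mem_filter.mp he).1
  have hsubset₂ : l₂.toFinset.filter (fun i => y i = τ) ⊆
      Finset.univ.filter (fun i => q < i ∧ y i = τ) := by
    intro i hi
    rcases Finset.mem_filter.mp hi with ⟨hil, hiτ⟩
    have hil₂ : i ∈ l₂ := List.mem_toFinset.mp hil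
    have hqi : q ≤ i := le_trans hqe (hcross e hel₁ i hil₂)
    have hne : q ≠ i := by
      rintro rfl
      rw [hq] at hiτ
      exact hστ hiτ
    exact Finset.mem_filter.mpr ⟨Finset.mem_univ _, lt_of_le_of_ne hqi hne, hiτ⟩
  exact absurd (le_trans hcb (Finset.card_le_card hsubset₂)) (not_le.mpr hb)

theorem noemb1 {y : Fin n → Fin 2} {σ : Fin 2} {a : ℕ}
    (ha : ((Finset.univ : Finset (Fin n)).filter (fun i => y i = σ)).card < a) :
    ¬ (List.replicate a σ <+ ((Finset.univ : Finset (Fin n)).sort (· ≤ ·)).map y) := by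
  intro hsub
  have h1 : a ≤ List.count σ (((Finset.univ : Finset (Fin n)).sort (· ≤ ·)).map y) := by
    calc a = List.count σ (List.replicate a σ) := List.count_replicate_self.symm
    _ ≤ _ := hsub.count_le σ
  rw [count_map_eq_card (Finset.sort_nodup _ _)] at h1
  rw [Finset.sort_toFinset] at h1
  exact absurd h1 (not_le.mpr ha)

open Finset List


theorem card_tri (w : Fin n → Fin 2) (σ : Fin 2) (p : Fin n) :
    (Finset.univ.filter (fun i => w i = σ)).card =
      (Finset.univ.filter (fun i => i < p ∧ w i = σ)).card
      + (if w p = σ then 1 else 0)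
      + (Finset.univ.filter (fun i => p < i ∧ w i = σ)).card := by
  classical
  have hsplit : Finset.univ.filter (fun i => w i = σ) =
      (Finset.univ.filter (fun i => i < p ∧ w i = σ)) ∪
      ((Finset.univ.filter (fun i => i = p ∧ w i = σ)) ∪
       (Finset.univ.filter (fun i => p < i ∧ w i = σ))) := by
    ext i
    simp only [Finset.mem_filter, Finset.mem_union, Finset.mem_univ, true_and]
    constructor
    · intro h
      rcases lt_trichotomy i p with hc | hc | hc
      · exact Or.inl ⟨hc, h⟩
      · exact Or.inr (Or.inl ⟨hc, h⟩)
      · exact Or.inr (Or.inr ⟨hc, h⟩)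
    · rintro (⟨_, h⟩ | ⟨_, h⟩ | ⟨_, h⟩) <;> exact h
  have hmid : (Finset.univ.filter (fun i => i = p ∧ w i = σ)).card
      = if w p = σ then 1 else 0 := by
    split_ifs with hw
    · rw [show Finset.univ.filter (fun i => i = p ∧ w i = σ) = {p} from ?_]
      · exact Finset.card_singleton p
      · ext i
        simp only [Finset.mem_filter, Finset.mem_univ, true_and, Finset.mem_singleton]
        constructor
        · rintro ⟨rfl, _⟩; rfl
        · rintro rfl; exact ⟨rfl, hw⟩
    · rw [show Finset.univ.filter (fun i => i = p ∧ w i = σ) = ∅ from ?_]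
      · exact Finset.card_empty
      · ext i
        simp only [Finset.mem_filter, Finset.mem_univ, true_and, Finset.notMem_empty,
          iff_false, not_and]
        rintro rfl
        exact hw
  have d1 : Disjoint (Finset.univ.filter (fun i => i = p ∧ w i = σ))
      (Finset.univ.filter (fun i => p < i ∧ w i = σ)) := by
    rw [Finset.disjoint_left]
    intro a ha hb
    obtain ⟨rfl, -⟩ := (Finset.mem_filter.mp ha).2
    exact absurd (Finset.mem_filter.mp hb).2.1 (lt_irrefl _)
  have d2 : Disjoint (Finset.univ.filter (fun i => i < p ∧ w i = σ))
      ((Finset.univ.filter (fun i => i = p ∧ w i = σ)) ∪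
       (Finset.univ.filter (fun i => p < i ∧ w i = σ))) := by
    rw [Finset.disjoint_left]
    intro a ha hb
    have hlt := (Finset.mem_filter.mp ha).2.1
    rcases Finset.mem_union.mp hb with h | h
    · obtain ⟨rfl, -⟩ := (Finset.mem_filter.mp h).2
      exact absurd hlt (lt_irrefl _)
    · exact absurd (hlt.trans (Finset.mem_filter.mp h).2.1) (lt_irrefl _)
  rw [hsplit, Finset.card_union_of_disjoint d2, Finset.card_union_of_disjoint d1, hmid]
  omega


theorem witness_eq {x y : Fin n → Fin 2} {p : Fin n}
    (hpre : ∀ i, i < p → x i = y i) (hxp : x p = 1) (hyp : y p = 0)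
    (hk : (Finset.univ.filter (fun i => x i = 1)).card
        = (Finset.univ.filter (fun i => y i = 1)).card) :
    ∃ I J : Finset (Fin n),
      ¬ ((I.sort (· ≤ ·)).map x <+ (Finset.univ.sort (· ≤ ·)).map y) ∧
      ¬ ((J.sort (· ≤ ·)).map y <+ (Finset.univ.sort (· ≤ ·)).map x) ∧
      I.card + J.card ≤ n + 2 := by
  classical
  -- prefix congruence
  have hpre1 : Finset.univ.filter (fun i => i < p ∧ y i = 1)
      = Finset.univ.filter (fun i => i < p ∧ x i = 1) := by
    ext i
    simp only [Finset.mem_filter, Finset.mem_univ, true_and]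
    constructor
    · rintro ⟨h1, h2⟩; exact ⟨h1, by rw [hpre i h1]; exact h2⟩
    · rintro ⟨h1, h2⟩; exact ⟨h1, by rw [← hpre i h1]; exact h2⟩
  have hpre0 : Finset.univ.filter (fun i => i < p ∧ y i = 0)
      = Finset.univ.filter (fun i => i < p ∧ x i = 0) := by
    ext i
    simp only [Finset.mem_filter, Finset.mem_univ, true_and]
    constructor
    · rintro ⟨h1, h2⟩; exact ⟨h1, by rw [hpre i h1]; exact h2⟩
    · rintro ⟨h1, h2⟩; exact ⟨h1, by rw [← hpre i h1]; exact h2⟩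
  have tOx := card_tri x 1 p
  have tOy := card_tri y 1 p
  have tZx := card_tri x 0 p
  have tZy := card_tri y 0 p
  rw [if_pos hxp] at tOx
  rw [if_neg (show ¬ y p = 1 by rw [hyp]; decide), hpre1] at tOy
  rw [if_neg (show ¬ x p = 0 by rw [hxp]; decide)] at tZx
  rw [if_pos hyp, hpre0] at tZy
  -- totals
  have totx : (Finset.univ.filter (fun i => x i = 1)).card
      + (Finset.univ.filter (fun i => x i = 0)).card = n := by
    have hcongr : (Finset.univ.filter (fun i => ¬ x i = 1))
        = Finset.univ.filter (fun i => x i = 0) := by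
      ext i
      simp only [Finset.mem_filter, Finset.mem_univ, true_and]
      rcases (show ∀ v : Fin 2, v = 0 ∨ v = 1 from by decide) (x i) with h | h <;> simp [h]
    rw [← hcongr, Finset.card_filter_add_card_filter_not, Finset.card_fin]
  have toty : (Finset.univ.filter (fun i => y i = 1)).card
      + (Finset.univ.filter (fun i => y i = 0)).card = n := by
    have hcongr : (Finset.univ.filter (fun i => ¬ y i = 1))
        = Finset.univ.filter (fun i => y i = 0) := by
      ext i
      simp only [Finset.mem_filter, Finset.mem_univ, true_and]
      rcases (show ∀ v : Fin 2, v = 0 ∨ v = 1 from by decide) (y i) with h | h <;> simp [h]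
    rw [← hcongr, Finset.card_filter_add_card_filter_not, Finset.card_fin]
  -- nonemptiness of the two minima sources
  have hKy_pos : 0 < (Finset.univ.filter (fun i => p < i ∧ y i = 1)).card := by omega
  have hZx_pos : 0 < (Finset.univ.filter (fun i => p < i ∧ x i = 0)).card := by omega
  obtain ⟨q, hq_mem, hq_min⟩ : ∃ q, q ∈ Finset.univ.filter (fun i => p < i ∧ y i = 1) ∧
      ∀ i ∈ Finset.univ.filter (fun i => p < i ∧ y i = 1), q ≤ i :=
    ⟨_, Finset.min'_mem _ (Finset.card_pos.mp hKy_pos),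
      fun i hi => Finset.min'_le _ i hi⟩
  obtain ⟨r, hr_mem, hr_min⟩ : ∃ r, r ∈ Finset.univ.filter (fun i => p < i ∧ x i = 0) ∧
      ∀ i ∈ Finset.univ.filter (fun i => p < i ∧ x i = 0), r ≤ i :=
    ⟨_, Finset.min'_mem _ (Finset.card_pos.mp hZx_pos),
      fun i hi => Finset.min'_le _ i hi⟩
  rw [Finset.mem_filter] at hq_mem hr_mem
  obtain ⟨-, hpq, hyq⟩ := hq_mem
  obtain ⟨-, hpr, hxr⟩ := hr_mem
  -- key prefix-count identities at q and r
  have hset5 : Finset.univ.filter (fun i => i < q ∧ y i = 1)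
      = Finset.univ.filter (fun i => i < p ∧ y i = 1) := by
    ext i
    simp only [Finset.mem_filter, Finset.mem_univ, true_and]
    constructor
    · rintro ⟨hiq, hy⟩
      refine ⟨?_, hy⟩
      rcases lt_trichotomy i p with hc | hc | hc
      · exact hc
      · exfalso; rw [hc, hyp] at hy; exact absurd hy (by decide)
      · exact absurd hiq (not_lt.mpr (hq_min i
          (Finset.mem_filter.mpr ⟨Finset.mem_univ _, hc, hy⟩)))
    · rintro ⟨hip, hy⟩
      exact ⟨hip.trans hpq, hy⟩
  have hset7 : Finset.univ.filter (fun i => i < r ∧ x i = 0)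
      = Finset.univ.filter (fun i => i < p ∧ x i = 0) := by
    ext i
    simp only [Finset.mem_filter, Finset.mem_univ, true_and]
    constructor
    · rintro ⟨hir, hy⟩
      refine ⟨?_, hy⟩
      rcases lt_trichotomy i p with hc | hc | hc
      · exact hc
      · exfalso; rw [hc, hxp] at hy; exact absurd hy (by decide)
      · exact absurd hir (not_lt.mpr (hr_min i
          (Finset.mem_filter.mpr ⟨Finset.mem_univ _, hc, hy⟩)))
    · rintro ⟨hip, hy⟩
      exact ⟨hip.trans hpr, hy⟩
  -- tail subset bounds
  have hsubq : Finset.univ.filter (fun i => q < i ∧ y i = 0)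
      ⊆ Finset.univ.filter (fun i => p < i ∧ y i = 0) := by
    intro i hi
    obtain ⟨-, hqi, hy⟩ := Finset.mem_filter.mp hi
    exact Finset.mem_filter.mpr ⟨Finset.mem_univ _, hpq.trans hqi, hy⟩
  have hsubr : Finset.univ.filter (fun i => r < i ∧ x i = 1)
      ⊆ Finset.univ.filter (fun i => p < i ∧ x i = 1) := by
    intro i hi
    obtain ⟨-, hri, hy⟩ := Finset.mem_filter.mp hi
    exact Finset.mem_filter.mpr ⟨Finset.mem_univ _, hpr.trans hri, hy⟩
  have hcq := Finset.card_le_card hsubq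
  have hcr := Finset.card_le_card hsubr
  -- the building blocks of I
  obtain ⟨Dx, hDx⟩ : ∃ d, d = (Finset.univ.filter (fun i => q < i ∧ y i = 0)).card + 1 :=
    ⟨_, rfl⟩
  obtain ⟨Dy, hDy⟩ : ∃ d, d = (Finset.univ.filter (fun i => r < i ∧ x i = 1)).card + 1 :=
    ⟨_, rfl⟩
  have hFins : Finset.univ.filter (fun i => i ≤ p ∧ x i = 1)
      = insert p (Finset.univ.filter (fun i => i < p ∧ x i = 1)) := by
    ext i
    simp only [Finset.mem_filter, Finset.mem_insert, Finset.mem_univ, true_and]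
    constructor
    · rintro ⟨hle, hy⟩
      rcases lt_or_eq_of_le hle with hc | hc
      · exact Or.inr ⟨hc, hy⟩
      · exact Or.inl hc
    · rintro (rfl | ⟨hlt, hy⟩)
      · exact ⟨le_refl _, hxp⟩
      · exact ⟨hlt.le, hy⟩
  have hFcard : (Finset.univ.filter (fun i => i ≤ p ∧ x i = 1)).card
      = (Finset.univ.filter (fun i => i < p ∧ x i = 1)).card + 1 := by
    rw [hFins, Finset.card_insert_of_notMem (by simp)]
  have hF'ins : Finset.univ.filter (fun i => i ≤ p ∧ y i = 0)
      = insert p (Finset.univ.filter (fun i => i < p ∧ y i = 0)) := by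
    ext i
    simp only [Finset.mem_filter, Finset.mem_insert, Finset.mem_univ, true_and]
    constructor
    · rintro ⟨hle, hy⟩
      rcases lt_or_eq_of_le hle with hc | hc
      · exact Or.inr ⟨hc, hy⟩
      · exact Or.inl hc
    · rintro (rfl | ⟨hlt, hy⟩)
      · exact ⟨le_refl _, hyp⟩
      · exact ⟨hlt.le, hy⟩
  have hF'card : (Finset.univ.filter (fun i => i ≤ p ∧ y i = 0)).card
      = (Finset.univ.filter (fun i => i < p ∧ y i = 0)).card + 1 := by
    rw [hF'ins, Finset.card_insert_of_notMem (by simp)]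
  -- choose G ⊆ zeros of x after p with card Dx
  obtain ⟨G, hGsub, hGcard⟩ := Finset.exists_subset_card_eq
    (s := Finset.univ.filter (fun i => p < i ∧ x i = 0)) (n := Dx) (by omega)
  obtain ⟨G', hG'sub, hG'card⟩ := Finset.exists_subset_card_eq
    (s := Finset.univ.filter (fun i => p < i ∧ y i = 1)) (n := Dy) (by omega)
  have hFG : ∀ f ∈ Finset.univ.filter (fun i => i ≤ p ∧ x i = 1), ∀ g ∈ G, f < g := by
    intro f hf g hg
    have h1 : f ≤ p := (Finset.mem_filter.mp hf).2.1
    have h2 : p < g := (Finset.mem_filter.mp (hGsub hg)).2.1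
    exact lt_of_le_of_lt h1 h2
  have hFG' : ∀ f ∈ Finset.univ.filter (fun i => i ≤ p ∧ y i = 0), ∀ g ∈ G', f < g := by
    intro f hf g hg
    have h1 : f ≤ p := (Finset.mem_filter.mp hf).2.1
    have h2 : p < g := (Finset.mem_filter.mp (hG'sub hg)).2.1
    exact lt_of_le_of_lt h1 h2
  refine ⟨Finset.univ.filter (fun i => i ≤ p ∧ x i = 1) ∪ G,
    Finset.univ.filter (fun i => i ≤ p ∧ y i = 0) ∪ G', ?_, ?_, ?_⟩
  · -- x-side witness fails to embed in y
    rw [sort_append hFG, List.map_append,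
      sort_map_const (fun i hi => (Finset.mem_filter.mp hi).2.2),
      sort_map_const (fun i hi => (Finset.mem_filter.mp (hGsub hi)).2.2)]
    rw [hGcard]
    apply noemb (show (1 : Fin 2) ≠ 0 by decide) hyq
    · rw [hset5, hpre1]
      omega
    · omega
  · -- y-side witness fails to embed in x
    rw [sort_append hFG', List.map_append,
      sort_map_const (fun i hi => (Finset.mem_filter.mp hi).2.2),
      sort_map_const (fun i hi => (Finset.mem_filter.mp (hG'sub hi)).2.2)]
    rw [hG'card]
    apply noemb (show (0 : Fin 2) ≠ 1 by decide) hxr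
    · rw [hset7]
      rw [hpre0] at hF'card
      omega
    · omega
  · -- cardinality bound
    have hdisjFG : Disjoint (Finset.univ.filter (fun i => i ≤ p ∧ x i = 1)) G :=
      Finset.disjoint_left.mpr (fun a ha hb => absurd (hFG a ha a hb) (lt_irrefl _))
    have hdisjFG' : Disjoint (Finset.univ.filter (fun i => i ≤ p ∧ y i = 0)) G' :=
      Finset.disjoint_left.mpr (fun a ha hb => absurd (hFG' a ha a hb) (lt_irrefl _))
    rw [Finset.card_union_of_disjoint hdisjFG, Finset.card_union_of_disjoint hdisjFG']
    rw [hpre0] at hF'card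
    omega

theorem total_count (w : Fin n → Fin 2) :
    (Finset.univ.filter (fun i => w i = 1)).card
      + (Finset.univ.filter (fun i => w i = 0)).card = n := by
  have hcongr : (Finset.univ.filter (fun i => ¬ w i = 1))
      = Finset.univ.filter (fun i => w i = 0) := by
    ext i
    simp only [Finset.mem_filter, Finset.mem_univ, true_and]
    rcases (show ∀ v : Fin 2, v = 0 ∨ v = 1 from by decide) (w i) with h | h <;> simp [h]
  rw [← hcongr, Finset.card_filter_add_card_filter_not, Finset.card_fin]

theorem witness_lt {x y : Fin n → Fin 2}
    (hk : (Finset.univ.filter (fun i => y i = 1)).card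
        < (Finset.univ.filter (fun i => x i = 1)).card) :
    ∃ I J : Finset (Fin n),
      ¬ ((I.sort (· ≤ ·)).map x <+ (Finset.univ.sort (· ≤ ·)).map y) ∧
      ¬ ((J.sort (· ≤ ·)).map y <+ (Finset.univ.sort (· ≤ ·)).map x) ∧
      I.card + J.card ≤ n + 2 := by
  classical
  have totx := total_count x
  have toty := total_count y
  obtain ⟨I, hIsub, hIcard⟩ := Finset.exists_subset_card_eq
    (s := Finset.univ.filter (fun i => x i = 1))
    (n := (Finset.univ.filter (fun i => y i = 1)).card + 1) (by omega)
  obtain ⟨J, hJsub, hJcard⟩ := Finset.exists_subset_card_eq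
    (s := Finset.univ.filter (fun i => y i = 0))
    (n := (Finset.univ.filter (fun i => x i = 0)).card + 1) (by omega)
  refine ⟨I, J, ?_, ?_, by omega⟩
  · rw [sort_map_const (fun i hi => (Finset.mem_filter.mp (hIsub hi)).2), hIcard]
    exact noemb1 (by omega)
  · rw [sort_map_const (fun i hi => (Finset.mem_filter.mp (hJsub hi)).2), hJcard]
    exact noemb1 (by omega)

theorem exists_witness {x y : Fin n → Fin 2} (hne : x ≠ y) :
    ∃ I J : Finset (Fin n),
      ¬ ((I.sort (· ≤ ·)).map x <+ (Finset.univ.sort (· ≤ ·)).map y) ∧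
      ¬ ((J.sort (· ≤ ·)).map y <+ (Finset.univ.sort (· ≤ ·)).map x) ∧
      I.card + J.card ≤ n + 2 := by
  classical
  rcases lt_trichotomy ((Finset.univ.filter (fun i => y i = 1)).card)
    ((Finset.univ.filter (fun i => x i = 1)).card) with hlt | heq | hgt
  · exact witness_lt hlt
  · -- equal counts: find first difference
    have hPd : (Finset.univ.filter (fun i => x i ≠ y i)).Nonempty := by
      by_contra hempty
      rw [Finset.not_nonempty_iff_eq_empty] at hempty
      apply hne
      funext i
      by_contra hxy
      have : i ∈ Finset.univ.filter (fun i => x i ≠ y i) :=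
        Finset.mem_filter.mpr ⟨Finset.mem_univ _, hxy⟩
      rw [hempty] at this
      exact absurd this (Finset.notMem_empty i)
    obtain ⟨p, hp_mem, hp_min⟩ : ∃ p, p ∈ Finset.univ.filter (fun i => x i ≠ y i) ∧
        ∀ i ∈ Finset.univ.filter (fun i => x i ≠ y i), p ≤ i :=
      ⟨_, Finset.min'_mem _ hPd, fun i hi => Finset.min'_le _ i hi⟩
    have hxyp : x p ≠ y p := (Finset.mem_filter.mp hp_mem).2
    have hpre : ∀ i, i < p → x i = y i := by
      intro i hip
      by_contra hxy
      exact absurd hip (not_lt.mpr (hp_min i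
        (Finset.mem_filter.mpr ⟨Finset.mem_univ _, hxy⟩)))
    rcases (show ∀ v : Fin 2, v = 0 ∨ v = 1 from by decide) (x p) with hx | hx
    · have hy : y p = 1 := by
        rcases (show ∀ v : Fin 2, v = 0 ∨ v = 1 from by decide) (y p) with h | h
        · exact absurd (hx.trans h.symm) hxyp
        · exact h
      obtain ⟨I, J, h1, h2, hs⟩ := witness_eq (fun i hip => (hpre i hip).symm) hy hx heq
      exact ⟨J, I, h2, h1, by omega⟩
    · have hy : y p = 0 := by
        rcases (show ∀ v : Fin 2, v = 0 ∨ v = 1 from by decide) (y p) with h | h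
        · exact h
        · exact absurd (hx.trans h.symm) hxyp
      exact witness_eq hpre hx hy heq.symm
  · obtain ⟨I, J, h1, h2, hs⟩ := witness_lt hgt
    exact ⟨J, I, h2, h1, by omega⟩

theorem card_powerset_filter_le (s : Finset (Fin n)) (t : ℕ) :
    ((s.powerset).filter (fun a => a.card ≤ t)).card = V₂ s.card t := by
  classical
  have hsplit : (s.powerset).filter (fun a => a.card ≤ t)
      = (Finset.range (t+1)).biUnion (fun i => Finset.powersetCard i s) := by
    ext a
    simp only [Finset.mem_filter, Finset.mem_powerset, Finset.mem_biUnion, Finset.mem_range,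
      Finset.mem_powersetCard]
    constructor
    · rintro ⟨hsub, hle⟩
      exact ⟨a.card, by omega, hsub, rfl⟩
    · rintro ⟨i, hi, hsub, hcard⟩
      exact ⟨hsub, by omega⟩
  rw [hsplit, Finset.card_biUnion]
  · unfold V₂
    apply Finset.sum_congr rfl
    intro i _
    rw [Finset.card_powersetCard]
  · intro i hi j hj hij
    rw [Function.onFun, Finset.disjoint_left]
    intro a ha hb
    rw [Finset.mem_powersetCard] at ha hb
    exact hij (ha.2.symm.trans hb.2)

theorem V₂_mono {a b t : ℕ} (h : a ≤ b) : V₂ a t ≤ V₂ b t := by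
  unfold V₂
  exact Finset.sum_le_sum (fun i _ => Nat.choose_le_choose i h)

theorem oneSide {t N : ℕ} {x y : Fin n → Fin 2} {D D' : Finset (Finset (Fin n))}
    (hD : ∀ S ∈ D, S.card ≤ t) (hDcard : D.card = N)
    (hout : D.image (delWord x) = D'.image (delWord y))
    (I : Finset (Fin n)) (hIcard : 2 * I.card ≤ n + 2)
    (hI : ¬ ((I.sort (· ≤ ·)).map x <+
        ((Finset.univ : Finset (Fin n)).sort (· ≤ ·)).map y)) :
    N ≤ V₂ n t - V₂ ((n + 1) / 2 - 1) t := by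
  classical
  have hDsub : D ⊆ Finset.univ.filter (fun S : Finset (Fin n) => S.card ≤ t ∧
      delWord x S <+ ((Finset.univ : Finset (Fin n)).sort (· ≤ ·)).map y) := by
    intro S hS
    refine Finset.mem_filter.mpr ⟨Finset.mem_univ _, hD S hS, ?_⟩
    have hmem : delWord x S ∈ D'.image (delWord y) := by
      rw [← hout]; exact Finset.mem_image_of_mem _ hS
    obtain ⟨S', hS', heq⟩ := Finset.mem_image.mp hmem
    rw [← heq]
    exact sort_map_sublist y Finset.sdiff_subset
  have hBsub : ∀ S ∈ ((Finset.univ : Finset (Fin n)) \ I).powerset.filter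
      (fun S => S.card ≤ t),
      S ∉ Finset.univ.filter (fun S : Finset (Fin n) => S.card ≤ t ∧
        delWord x S <+ ((Finset.univ : Finset (Fin n)).sort (· ≤ ·)).map y) := by
    intro S hS hmem
    obtain ⟨hSpow, hSt⟩ := Finset.mem_filter.mp hS
    rw [Finset.mem_powerset] at hSpow
    have hIsub : I ⊆ Finset.univ \ S := by
      intro i hi
      rw [Finset.mem_sdiff]
      refine ⟨Finset.mem_univ _, fun hiS => ?_⟩
      have h2 := hSpow hiS
      rw [Finset.mem_sdiff] at h2
      exact h2.2 hi
    have h1 : (I.sort (· ≤ ·)).map x <+ delWord x S := sort_map_sublist x hIsub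
    exact hI (h1.trans (Finset.mem_filter.mp hmem).2.2)
  have hdisj : Disjoint
      (Finset.univ.filter (fun S : Finset (Fin n) => S.card ≤ t ∧
        delWord x S <+ ((Finset.univ : Finset (Fin n)).sort (· ≤ ·)).map y))
      (((Finset.univ : Finset (Fin n)) \ I).powerset.filter (fun S => S.card ≤ t)) :=
    Finset.disjoint_right.mpr hBsub
  have hcard_all :
      (Finset.univ.filter (fun S : Finset (Fin n) => S.card ≤ t ∧
        delWord x S <+ ((Finset.univ : Finset (Fin n)).sort (· ≤ ·)).map y)).card
      + ((((Finset.univ : Finset (Fin n)) \ I).powerset).filter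
          (fun S => S.card ≤ t)).card ≤ V₂ n t := by
    rw [← Finset.card_union_of_disjoint hdisj]
    have hsub2 : (Finset.univ.filter (fun S : Finset (Fin n) => S.card ≤ t ∧
        delWord x S <+ ((Finset.univ : Finset (Fin n)).sort (· ≤ ·)).map y))
        ∪ (((Finset.univ : Finset (Fin n)) \ I).powerset.filter (fun S => S.card ≤ t))
        ⊆ (Finset.univ : Finset (Fin n)).powerset.filter (fun S => S.card ≤ t) := by
      intro S hS
      rcases Finset.mem_union.mp hS with h | h
      · exact Finset.mem_filter.mpr ⟨Finset.mem_powerset.mpr (Finset.subset_univ _),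
          (Finset.mem_filter.mp h).2.1⟩
      · exact Finset.mem_filter.mpr ⟨Finset.mem_powerset.mpr (Finset.subset_univ _),
          (Finset.mem_filter.mp h).2⟩
    calc _ ≤ ((Finset.univ : Finset (Fin n)).powerset.filter
        (fun S : Finset (Fin n) => S.card ≤ t)).card := Finset.card_le_card hsub2
    _ = V₂ n t := by rw [card_powerset_filter_le, Finset.card_fin]
  have hBcard : ((((Finset.univ : Finset (Fin n)) \ I).powerset).filter
      (fun S : Finset (Fin n) => S.card ≤ t)).card = V₂ (n - I.card) t := by
    rw [card_powerset_filter_le, Finset.card_sdiff_of_subset (Finset.subset_univ _), Finset.card_fin]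
  have hIle : I.card ≤ n := by
    have h := Finset.card_le_univ I
    simpa using h
  have hmono : V₂ ((n + 1) / 2 - 1) t ≤ V₂ (n - I.card) t := V₂_mono (by omega)
  have hN : N ≤ (Finset.univ.filter (fun S : Finset (Fin n) => S.card ≤ t ∧
      delWord x S <+ ((Finset.univ : Finset (Fin n)).sort (· ≤ ·)).map y)).card :=
    hDcard ▸ Finset.card_le_card hDsub
  omega

end DelUniq

theorem deletion_vectors_at_most_t_uniqueness
    (t n : ℕ) (ht : 1 ≤ t) (hn : 2 * t + 2 ≤ n)
    (x x' : Fin n → Fin 2) (hne : x ≠ x')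
    (N : ℕ) (D D' : Finset (Finset (Fin n)))
    (hD : ∀ S ∈ D, S.card ≤ t) (hD' : ∀ S ∈ D', S.card ≤ t)
    (hDcard : D.card = N) (hD'card : D'.card = N)
    (hout : D.image (delWord x) = D'.image (delWord x')) :
    N ≤ V₂ n t - V₂ ((n + 1) / 2 - 1) t := by
  classical
  obtain ⟨I, J, hIx, hJy, hsum⟩ := DelUniq.exists_witness hne
  rcases le_or_gt I.card J.card with hc | hc
  · exact DelUniq.oneSide hD hDcard hout I (by omega) hIx
  · exact DelUniq.oneSide hD' hD'card hout.symm J (by omega) hJy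
end

section
/- Let t ≥ 1 and n ≥ 2t+2 be integers, and let x and x' be two distinct binary words of length n. Suppose D and D' are sets of deletion vectors for length-n words, each vector of weight exactly t, with |D| = |D'| = N, such that the output set of D on x equals the output set of D' on x'. Then N ≤ C(n,t) − C(⌈n/2⌉ − 1, t). (Equivalently, if N ≥ C(n,t) − C(⌈n/2⌉−1,t) + 1 distinct deletion vectors of weight exactly t are applied, the set of output words uniquely determines the transmitted binary word.) -/
namespace DelUniq

open List

variable {n : ℕ}

/-- The full word as a list. -/
def fullW (n : ℕ) (x : Fin n → Fin 2) : List (Fin 2) :=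
  ((Finset.univ : Finset (Fin n)).sort (· ≤ ·)).map x

lemma sort_subset_sublist {A B : Finset (Fin n)} (h : A ⊆ B) :
    A.sort (· ≤ ·) <+ B.sort (· ≤ ·) := by
  apply List.sublist_of_subperm_of_pairwise _ (Finset.pairwise_sort _ _) (Finset.pairwise_sort _ _)
  rw [← Multiset.coe_le, Finset.sort_eq, Finset.sort_eq]
  exact Finset.val_le_iff.2 h

lemma sort_split (A : Finset (Fin n)) (k : ℕ) :
    A.sort (· ≤ ·) =
      ((A.filter (fun p : Fin n => (p : ℕ) < k)).sort (· ≤ ·)) ++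
      ((A.filter (fun p : Fin n => ¬ (p : ℕ) < k)).sort (· ≤ ·)) := by
  classical
  refine List.Perm.eq_of_pairwise' (Finset.pairwise_sort _ _) ?_ ?_
  swap
  · rw [← Multiset.coe_eq_coe]
    change ((A.sort (· ≤ ·) : List (Fin n)) : Multiset (Fin n))
      = ((_ ++ _ : List (Fin n)) : Multiset (Fin n))
    rw [← Multiset.coe_add]
    rw [Finset.sort_eq, Finset.sort_eq, Finset.sort_eq, Finset.filter_val, Finset.filter_val]
    exact (Multiset.filter_add_not _ _).symm
  · show List.Pairwise _ _
    rw [List.pairwise_append]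
    refine ⟨Finset.pairwise_sort _ _, Finset.pairwise_sort _ _, ?_⟩
    intro a ha b hb
    rw [Finset.mem_sort] at ha hb
    have h1 := (Finset.mem_filter.1 ha).2
    have h2 := (Finset.mem_filter.1 hb).2
    show a ≤ b
    have : (a : ℕ) ≤ (b : ℕ) := by omega
    exact this

lemma count_map_sort (x : Fin n → Fin 2) (A : Finset (Fin n)) (c : Fin 2) :
    ((A.sort (· ≤ ·)).map x).count c = (A.filter (fun p : Fin n => x p = c)).card := by
  classical
  have h1 : ((A.sort (· ≤ ·)).map x).count c
      = Multiset.count c (Multiset.map x ((A.sort (· ≤ ·) : List (Fin n)) : Multiset (Fin n))) := by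
    rw [Multiset.map_coe, Multiset.coe_count]
  rw [h1, Finset.sort_eq, Multiset.count_map]
  rw [Finset.card_def, Finset.filter_val]
  congr 1
  apply Multiset.filter_congr
  intro p _
  exact ⟨fun h => h.symm, fun h => h.symm⟩

lemma block_sublist {α : Type*} [DecidableEq α] (c d : α) {l1 l2 : List α} {a b : ℕ}
    (h1 : a ≤ l1.count c) (h2 : b ≤ l2.count d) :
    List.replicate a c ++ List.replicate b d <+ l1 ++ l2 :=
  (List.replicate_sublist_iff.2 h1).append (List.replicate_sublist_iff.2 h2)

lemma block_not_sublist {α : Type*} [DecidableEq α] {c d : α} {l1 l2 : List α} {a b : ℕ}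
    (h1 : l1.count c < a) (h2 : l2.count d < b) :
    ¬ (List.replicate a c ++ List.replicate b d <+ l1 ++ l2) := by
  intro h
  obtain ⟨q1, q2, heq, s1, s2⟩ := List.sublist_append_iff.1 h
  rcases List.append_eq_append_iff.1 heq.symm with ⟨a', ha1, ha2⟩ | ⟨c', hc1, hc2⟩
  · have hq2 : b ≤ q2.count d := by
      rw [ha2, List.count_append, List.count_replicate_self]
      omega
    have := hq2.trans (s2.count_le d)
    omega
  · have hq1 : a ≤ q1.count c := by
      rw [hc1, List.count_append, List.count_replicate_self]
      omega
    have := hq1.trans (s1.count_le c)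
    omega

lemma delWord_sublist_full (x : Fin n → Fin 2) (S : Finset (Fin n)) :
    delWord x S <+ fullW n x :=
  (sort_subset_sublist (Finset.sdiff_subset)).map x

/-- Main counting lemma for one side. -/
lemma side_bound {t : ℕ} (z z' : Fin n → Fin 2) (Dz : Finset (Finset (Fin n)))
    (hcard : ∀ S ∈ Dz, S.card = t)
    (hsub : ∀ S ∈ Dz, delWord z S <+ fullW n z')
    (c d : Fin 2) (k a b : ℕ)
    (ha : a ≤ (Finset.univ.filter (fun p : Fin n => (p : ℕ) < k ∧ z p = c)).card)
    (hb : b ≤ (Finset.univ.filter (fun p : Fin n => ¬ (p : ℕ) < k ∧ z p = d)).card)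
    (hnot : ¬ (List.replicate a c ++ List.replicate b d <+ fullW n z')) :
    Dz.card + (n - (a + b)).choose t ≤ n.choose t := by
  classical
  obtain ⟨E1, hE1s, hE1c⟩ := Finset.exists_subset_card_eq ha
  obtain ⟨E2, hE2s, hE2c⟩ := Finset.exists_subset_card_eq hb
  have hE1 : ∀ p ∈ E1, (p : ℕ) < k ∧ z p = c :=
    fun p hp => (Finset.mem_filter.1 (hE1s hp)).2
  have hE2 : ∀ p ∈ E2, ¬ (p : ℕ) < k ∧ z p = d :=
    fun p hp => (Finset.mem_filter.1 (hE2s hp)).2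
  have hdisjE : Disjoint E1 E2 := by
    rw [Finset.disjoint_left]
    intro p hp1 hp2
    exact (hE2 p hp2).1 (hE1 p hp1).1
  have hEcard : (E1 ∪ E2).card = a + b := by
    rw [Finset.card_union_of_disjoint hdisjE, hE1c, hE2c]
  set B := Finset.powersetCard t (Finset.univ \ (E1 ∪ E2)) with hBdef
  have hBcard : B.card = (n - (a + b)).choose t := by
    rw [hBdef, Finset.card_powersetCard, Finset.card_sdiff_of_subset (Finset.subset_univ _),
      hEcard, Finset.card_univ, Fintype.card_fin]
  have hq : ∀ S ∈ B, List.replicate a c ++ List.replicate b d <+ delWord z S := by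
    intro S hS
    have hSsub : S ⊆ Finset.univ \ (E1 ∪ E2) := (Finset.mem_powersetCard.1 hS).1
    have hE1S : E1 ⊆ Finset.univ \ S := by
      intro p hp
      rw [Finset.mem_sdiff]
      refine ⟨Finset.mem_univ _, fun hpS => ?_⟩
      have h3 := hSsub hpS
      rw [Finset.mem_sdiff] at h3
      exact h3.2 (Finset.mem_union_left _ hp)
    have hE2S : E2 ⊆ Finset.univ \ S := by
      intro p hp
      rw [Finset.mem_sdiff]
      refine ⟨Finset.mem_univ _, fun hpS => ?_⟩
      have h3 := hSsub hpS
      rw [Finset.mem_sdiff] at h3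
      exact h3.2 (Finset.mem_union_right _ hp)
    show List.replicate a c ++ List.replicate b d <+ ((Finset.univ \ S).sort (· ≤ ·)).map z
    rw [sort_split (Finset.univ \ S) k, List.map_append]
    apply block_sublist
    · rw [count_map_sort, Finset.filter_filter]
      rw [← hE1c]
      apply Finset.card_le_card
      intro p hp
      rw [Finset.mem_filter]
      exact ⟨hE1S hp, (hE1 p hp).1, (hE1 p hp).2⟩
    · rw [count_map_sort, Finset.filter_filter]
      rw [← hE2c]
      apply Finset.card_le_card
      intro p hp
      rw [Finset.mem_filter]
      exact ⟨hE2S hp, (hE2 p hp).1, (hE2 p hp).2⟩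
  have hdisj : Disjoint Dz B := by
    rw [Finset.disjoint_left]
    intro S hSD hSB
    exact hnot ((hq S hSB).trans (hsub S hSD))
  have hsubset : Dz ∪ B ⊆ Finset.powersetCard t (Finset.univ : Finset (Fin n)) := by
    intro S hS
    rw [Finset.mem_powersetCard]
    rcases Finset.mem_union.1 hS with h | h
    · exact ⟨Finset.subset_univ _, hcard S h⟩
    · exact ⟨Finset.subset_univ _, (Finset.mem_powersetCard.1 h).2⟩
  have hle := Finset.card_le_card hsubset
  rw [Finset.card_union_of_disjoint hdisj, hBcard, Finset.card_powersetCard,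
    Finset.card_univ, Fintype.card_fin] at hle
  omega

end DelUniq

theorem deletion_vectors_exactly_t_uniqueness
    (t n : ℕ) (ht : 1 ≤ t) (hn : 2 * t + 2 ≤ n)
    (x x' : Fin n → Fin 2) (hne : x ≠ x')
    (N : ℕ) (D D' : Finset (Finset (Fin n)))
    (hD : ∀ S ∈ D, S.card = t) (hD' : ∀ S ∈ D', S.card = t)
    (hDcard : D.card = N) (hD'card : D'.card = N)
    (hout : D.image (delWord x) = D'.image (delWord x')) :
    N ≤ n.choose t - ((n + 1) / 2 - 1).choose t := by
  classical
  have hsubx : ∀ S ∈ D, List.Sublist (delWord x S) (DelUniq.fullW n x') := by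
    intro S hS
    have hmem : delWord x S ∈ D'.image (delWord x') := by
      rw [← hout]; exact Finset.mem_image_of_mem _ hS
    obtain ⟨S', _, hEq⟩ := Finset.mem_image.1 hmem
    rw [← hEq]
    exact DelUniq.delWord_sublist_full x' S'
  have hsubx' : ∀ S ∈ D', List.Sublist (delWord x' S) (DelUniq.fullW n x) := by
    intro S hS
    have hmem : delWord x' S ∈ D.image (delWord x) := by
      rw [hout]; exact Finset.mem_image_of_mem _ hS
    obtain ⟨S', _, hEq⟩ := Finset.mem_image.1 hmem
    rw [← hEq]
    exact DelUniq.delWord_sublist_full x S'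
  -- the first position where x and x' differ
  have hne' : ∃ p, x p ≠ x' p := by
    by_contra h
    push_neg at h
    exact hne (funext h)
  have hDfne : (Finset.univ.filter (fun p : Fin n => x p ≠ x' p)).Nonempty := by
    obtain ⟨p, hp⟩ := hne'
    exact ⟨p, by simp [hp]⟩
  set i := (Finset.univ.filter (fun p : Fin n => x p ≠ x' p)).min' hDfne with hidef
  have hi : x i ≠ x' i := by
    have hm := Finset.min'_mem _ hDfne
    rw [← hidef] at hm
    exact (Finset.mem_filter.1 hm).2
  have hmin : ∀ p : Fin n, (p : ℕ) < (i : ℕ) → x p = x' p := by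
    intro p hp
    by_contra hpc
    have hle : i ≤ p := Finset.min'_le _ p (by simp [hpc])
    have : (i : ℕ) ≤ (p : ℕ) := hle
    omega
  set c := x i with hc
  set d := x' i with hd
  have hcd : c ≠ d := hi
  set k : ℕ := (i : ℕ) + 1 with hk
  set Pzc := (Finset.univ.filter (fun p : Fin n => (p : ℕ) < k ∧ x p = c)).card with hPzc
  set Pzd := (Finset.univ.filter (fun p : Fin n => (p : ℕ) < k ∧ x p = d)).card with hPzd
  set Szc := (Finset.univ.filter (fun p : Fin n => ¬ (p : ℕ) < k ∧ x p = c)).card with hSzc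
  set Szd := (Finset.univ.filter (fun p : Fin n => ¬ (p : ℕ) < k ∧ x p = d)).card with hSzd
  set P'c := (Finset.univ.filter (fun p : Fin n => (p : ℕ) < k ∧ x' p = c)).card with hP'c
  set P'd := (Finset.univ.filter (fun p : Fin n => (p : ℕ) < k ∧ x' p = d)).card with hP'd
  set S'c := (Finset.univ.filter (fun p : Fin n => ¬ (p : ℕ) < k ∧ x' p = c)).card with hS'c
  set S'd := (Finset.univ.filter (fun p : Fin n => ¬ (p : ℕ) < k ∧ x' p = d)).card with hS'd
  have htwo : ∀ e : Fin 2, e = c ∨ e = d := by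
    intro e
    have h1 : (e : ℕ) < 2 := e.isLt
    have h2 : (c : ℕ) < 2 := c.isLt
    have h3 : (d : ℕ) < 2 := d.isLt
    have h4 : (c : ℕ) ≠ (d : ℕ) := fun h => hcd (Fin.ext h)
    have h5 : (e : ℕ) = (c : ℕ) ∨ (e : ℕ) = (d : ℕ) := by omega
    rcases h5 with h | h
    · exact Or.inl (Fin.ext h)
    · exact Or.inr (Fin.ext h)
  have hkn : k ≤ n := by
    have := i.isLt
    omega
  have hprefcard : (Finset.univ.filter (fun p : Fin n => (p : ℕ) < k)).card = k := by
    have hbij : (Finset.univ.filter (fun p : Fin n => (p : ℕ) < k)).card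
        = (Finset.range k).card := by
      apply Finset.card_bij (fun (p : Fin n) _ => (p : ℕ))
      · intro p hp
        rw [Finset.mem_range]
        exact (Finset.mem_filter.1 hp).2
      · intro p _ q _ hpq
        exact Fin.ext hpq
      · intro j hj
        rw [Finset.mem_range] at hj
        exact ⟨⟨j, lt_of_lt_of_le hj hkn⟩, by simp [hj], rfl⟩
    rw [hbij, Finset.card_range]
  have hsufcard : (Finset.univ.filter (fun p : Fin n => ¬ (p : ℕ) < k)).card = n - k := by
    have hpn := Finset.card_filter_add_card_filter_not
      (s := (Finset.univ : Finset (Fin n))) (p := fun p : Fin n => (p : ℕ) < k)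
    rw [Finset.card_fin, hprefcard] at hpn
    omega
  have hsplitgen : ∀ (z : Fin n → Fin 2) (F : Finset (Fin n)),
      (F.filter (fun p => z p = c)).card + (F.filter (fun p => z p = d)).card = F.card := by
    intro z F
    rw [← Finset.card_union_of_disjoint]
    · congr 1
      ext p
      simp only [Finset.mem_union, Finset.mem_filter]
      constructor
      · rintro (⟨h, _⟩ | ⟨h, _⟩) <;> exact h
      · intro h
        rcases htwo (z p) with h2 | h2
        · exact Or.inl ⟨h, h2⟩
        · exact Or.inr ⟨h, h2⟩
    · rw [Finset.disjoint_left]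
      intro p hp1 hp2
      have e1 := (Finset.mem_filter.1 hp1).2
      have e2 := (Finset.mem_filter.1 hp2).2
      exact hcd (e1 ▸ e2 ▸ rfl)
  have hPk : Pzc + Pzd = k := by
    rw [hPzc, hPzd, ← Finset.filter_filter, ← Finset.filter_filter, hsplitgen x, hprefcard]
  have hPk' : P'c + P'd = k := by
    rw [hP'c, hP'd, ← Finset.filter_filter, ← Finset.filter_filter, hsplitgen x', hprefcard]
  have hSk : Szc + Szd = n - k := by
    rw [hSzc, hSzd, ← Finset.filter_filter, ← Finset.filter_filter, hsplitgen x, hsufcard]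
  have hSk' : S'c + S'd = n - k := by
    rw [hS'c, hS'd, ← Finset.filter_filter, ← Finset.filter_filter, hsplitgen x', hsufcard]
  -- prefix relations
  have hfilt1 : (Finset.univ.filter (fun p : Fin n => (p : ℕ) < k ∧ x p = c))
      = insert i (Finset.univ.filter (fun p : Fin n => (p : ℕ) < k ∧ x' p = c)) := by
    ext p
    simp only [Finset.mem_insert, Finset.mem_filter, Finset.mem_univ, true_and]
    constructor
    · rintro ⟨hpk, hpc⟩
      rcases eq_or_ne p i with rfl | hpi
      · exact Or.inl rfl
      · have hpi' : (p : ℕ) ≠ (i : ℕ) := fun h => hpi (Fin.ext h)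
        have hplt : (p : ℕ) < (i : ℕ) := by omega
        exact Or.inr ⟨hpk, (hmin p hplt) ▸ hpc⟩
    · rintro (rfl | ⟨hpk, hpc⟩)
      · exact ⟨by omega, hc.symm⟩
      · rcases eq_or_ne p i with rfl | hpi
        · exact absurd (hd.trans hpc) hcd.symm
        · have hpi' : (p : ℕ) ≠ (i : ℕ) := fun h => hpi (Fin.ext h)
          have hplt : (p : ℕ) < (i : ℕ) := by omega
          exact ⟨hpk, (hmin p hplt).symm ▸ hpc⟩
  have hinotin1 : i ∉ (Finset.univ.filter (fun p : Fin n => (p : ℕ) < k ∧ x' p = c)) := by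
    simp only [Finset.mem_filter, Finset.mem_univ, true_and, not_and]
    intro _
    exact fun h => hcd (hd.trans h).symm
  have hP1 : Pzc = P'c + 1 := by
    rw [hPzc, hfilt1, Finset.card_insert_of_notMem hinotin1, hP'c]
  have hfilt2 : (Finset.univ.filter (fun p : Fin n => (p : ℕ) < k ∧ x' p = d))
      = insert i (Finset.univ.filter (fun p : Fin n => (p : ℕ) < k ∧ x p = d)) := by
    ext p
    simp only [Finset.mem_insert, Finset.mem_filter, Finset.mem_univ, true_and]
    constructor
    · rintro ⟨hpk, hpd⟩
      rcases eq_or_ne p i with rfl | hpi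
      · exact Or.inl rfl
      · have hpi' : (p : ℕ) ≠ (i : ℕ) := fun h => hpi (Fin.ext h)
        have hplt : (p : ℕ) < (i : ℕ) := by omega
        exact Or.inr ⟨hpk, (hmin p hplt).symm ▸ hpd⟩
    · rintro (rfl | ⟨hpk, hpd⟩)
      · exact ⟨by omega, hd.symm⟩
      · rcases eq_or_ne p i with rfl | hpi
        · exact absurd (hc.trans hpd) hcd
        · have hpi' : (p : ℕ) ≠ (i : ℕ) := fun h => hpi (Fin.ext h)
          have hplt : (p : ℕ) < (i : ℕ) := by omega
          exact ⟨hpk, (hmin p hplt) ▸ hpd⟩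
  have hinotin2 : i ∉ (Finset.univ.filter (fun p : Fin n => (p : ℕ) < k ∧ x p = d)) := by
    simp only [Finset.mem_filter, Finset.mem_univ, true_and, not_and]
    intro _
    exact fun h => hcd (hc.trans h)
  have hP2 : P'd = Pzd + 1 := by
    rw [hP'd, hfilt2, Finset.card_insert_of_notMem hinotin2, hPzd]
  -- final arithmetic helper
  have final : ∀ L1 L2 : ℕ, N + (n - L1).choose t ≤ n.choose t →
      N + (n - L2).choose t ≤ n.choose t → L1 + L2 ≤ n + 2 →
      N ≤ n.choose t - ((n + 1) / 2 - 1).choose t := by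
    intro L1 L2 hA hB hsum
    have hm : (n + 1) / 2 - 1 ≤ n - L1 ∨ (n + 1) / 2 - 1 ≤ n - L2 := by omega
    rcases hm with h | h
    · have := Nat.choose_le_choose t h
      omega
    · have := Nat.choose_le_choose t h
      omega
  -- count of a letter in a full word
  have hcountfull : ∀ (z : Fin n → Fin 2) (e : Fin 2),
      (DelUniq.fullW n z).count e
      = (Finset.univ.filter (fun p : Fin n => (p : ℕ) < k ∧ z p = e)).card
        + (Finset.univ.filter (fun p : Fin n => ¬ (p : ℕ) < k ∧ z p = e)).card := by
    intro z e
    rw [DelUniq.fullW, DelUniq.sort_split (Finset.univ : Finset (Fin n)) k, List.map_append,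
      List.count_append, DelUniq.count_map_sort, DelUniq.count_map_sort,
      Finset.filter_filter, Finset.filter_filter]
  rcases lt_trichotomy S'd Szd with hcase | hcase | hcase
  · -- Case A : S'd < Szd
    have h1 := DelUniq.side_bound x x' D hD hsubx c d k Pzc (S'd + 1) hPzc.le
      (by rw [← hSzd]; omega)
      (by
        rw [DelUniq.fullW, DelUniq.sort_split (Finset.univ : Finset (Fin n)) k, List.map_append]
        apply DelUniq.block_not_sublist
        · rw [DelUniq.count_map_sort, Finset.filter_filter, ← hP'c]
          omega
        · rw [DelUniq.count_map_sort, Finset.filter_filter, ← hS'd]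
          omega)
    have h2 := DelUniq.side_bound x' x D' hD' hsubx' d c k P'd (Szc + 1) hP'd.le
      (by rw [← hS'c]; omega)
      (by
        rw [DelUniq.fullW, DelUniq.sort_split (Finset.univ : Finset (Fin n)) k, List.map_append]
        apply DelUniq.block_not_sublist
        · rw [DelUniq.count_map_sort, Finset.filter_filter, ← hPzd]
          omega
        · rw [DelUniq.count_map_sort, Finset.filter_filter, ← hSzc]
          omega)
    rw [hDcard] at h1
    rw [hD'card] at h2
    exact final _ _ h1 h2 (by omega)
  · -- Case C : S'd = Szd
    have h1 := DelUniq.side_bound x x' D hD hsubx c c k Pzc Szc hPzc.le hSzc.le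
      (by
        intro hcontra
        have hcount := hcontra.count_le c
        simp only [List.count_append, List.count_replicate_self] at hcount
        rw [hcountfull x' c] at hcount
        omega)
    have h2 := DelUniq.side_bound x' x D' hD' hsubx' d d k P'd S'd hP'd.le hS'd.le
      (by
        intro hcontra
        have hcount := hcontra.count_le d
        simp only [List.count_append, List.count_replicate_self] at hcount
        rw [hcountfull x d] at hcount
        omega)
    rw [hDcard] at h1
    rw [hD'card] at h2
    exact final _ _ h1 h2 (by omega)
  · -- Case B : Szd < S'd
    have h1 := DelUniq.side_bound x x' D hD hsubx c c k Pzc (S'c + 1) hPzc.le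
      (by rw [← hSzc]; omega)
      (by
        intro hcontra
        have hcount := hcontra.count_le c
        simp only [List.count_append, List.count_replicate_self] at hcount
        rw [hcountfull x' c] at hcount
        omega)
    have h2 := DelUniq.side_bound x' x D' hD' hsubx' d d k P'd (Szd + 1) hP'd.le
      (by rw [← hS'd]; omega)
      (by
        intro hcontra
        have hcount := hcontra.count_le d
        simp only [List.count_append, List.count_replicate_self] at hcount
        rw [hcountfull x d] at hcount
        omega)
    rw [hDcard] at h1
    rw [hD'card] at h2
    exact final _ _ h1 h2 (by omega)
end

section
/- Let t ≥ 1 and n ≥ 2t+2 be integers, and consider the binary words x = 0^{⌈n/2⌉−1} 1 0^{⌊n/2⌋} and x' = 0^{⌈n/2⌉} 1 0^{⌊n/2⌋−1} of length n. Then there exist sets D and D' of deletion vectors for length-n words, each vector of weight at most t, with |D| = |D'| = V_2(n,t) − V_2(⌈n/2⌉−1, t), such that the output set of D on x equals the output set of D' on x'. In particular, the bound of the uniqueness theorem for deletion vectors of weight at most t is tight. -/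
namespace DelTight


/-- word with single 1 at a zero-or-one position pattern -/
def zo (a b : ℕ) : List (Fin 2) := List.replicate a 0 ++ 1 :: List.replicate b 0

lemma map_sort_zero {n : ℕ} (x : Fin n → Fin 2) (s : Finset (Fin n))
    (h : ∀ i ∈ s, x i = 0) : (s.sort (· ≤ ·)).map x = List.replicate s.card 0 := by
  rw [List.eq_replicate_iff]
  constructor
  · simp
  · intro b hb
    rcases List.mem_map.1 hb with ⟨i, hi, rfl⟩
    exact h i ((Finset.mem_sort _).1 hi)

lemma sort_split {n : ℕ} (C : Finset (Fin n)) (q : Fin n) (hq : q ∈ C) :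
    C.sort (· ≤ ·) = (C.filter (· < q)).sort (· ≤ ·) ++ q :: (C.filter (q < ·)).sort (· ≤ ·) := by
  have hperm : (C.sort (· ≤ ·) : Multiset (Fin n)) =
      (((C.filter (· < q)).sort (· ≤ ·) ++ q :: (C.filter (q < ·)).sort (· ≤ ·) : List (Fin n)) : Multiset (Fin n)) := by
    have hsplit : C = (C.filter (· < q)).disjUnion (insert q (C.filter (q < ·)))
        (by
          rw [Finset.disjoint_left]
          intro a ha hb
          simp only [Finset.mem_filter] at ha
          simp only [Finset.mem_insert, Finset.mem_filter] at hb
          rcases hb with rfl | ⟨_, hb⟩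
          · exact absurd ha.2 (lt_irrefl _)
          · exact absurd (ha.2.trans hb) (lt_irrefl _)) := by
      ext i
      simp only [Finset.disjUnion_eq_union, Finset.mem_union, Finset.mem_filter,
        Finset.mem_insert]
      constructor
      · intro hi
        rcases lt_trichotomy i q with h | h | h
        · exact Or.inl ⟨hi, h⟩
        · exact Or.inr (Or.inl h)
        · exact Or.inr (Or.inr ⟨hi, h⟩)
      · rintro (⟨hi, _⟩ | rfl | ⟨hi, _⟩) <;> first | exact hi | exact hq
    have hq' : q ∉ C.filter (q < ·) := by simp
    calc (C.sort (· ≤ ·) : Multiset (Fin n)) = C.val := Finset.sort_eq _ _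
      _ = _ := by
        conv_lhs => rw [hsplit]
        show (Finset.filter (· < q) C).val + (insert q (Finset.filter (q < ·) C)).val = _
        rw [Finset.insert_val_of_notMem hq']
        rw [← Finset.sort_eq (C.filter (· < q)) (· ≤ ·),
          ← Finset.sort_eq (C.filter (q < ·)) (· ≤ ·)]
        rfl
  refine List.Perm.eq_of_pairwise' (Finset.pairwise_sort _ _) ?_ (Multiset.coe_eq_coe.1 hperm)
  show List.Pairwise _ _
  rw [List.pairwise_append]
  refine ⟨Finset.pairwise_sort _ _, ?_, ?_⟩
  · rw [List.pairwise_cons]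
    refine ⟨?_, Finset.pairwise_sort _ _⟩
    intro b hb
    have := (Finset.mem_sort _).1 hb
    exact le_of_lt (Finset.mem_filter.1 this).2
  · intro a ha b hb
    have ha' := (Finset.mem_filter.1 ((Finset.mem_sort _).1 ha)).2
    rcases List.mem_cons.1 hb with rfl | hb
    · exact le_of_lt ha'
    · have hb' := (Finset.mem_filter.1 ((Finset.mem_sort _).1 hb)).2
      exact le_of_lt (ha'.trans hb')
lemma delWord_rep {n q : ℕ} (hq : q < n) (S : Finset (Fin n)) (hS : (⟨q, hq⟩ : Fin n) ∈ S) :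
    delWord (fun i : Fin n => if (i:ℕ) = q then 1 else 0) S = List.replicate (n - S.card) (0 : Fin 2) := by
  unfold delWord
  rw [map_sort_zero _ _ ?_, Finset.card_sdiff_of_subset (Finset.subset_univ S), Finset.card_univ,
    Fintype.card_fin]
  intro i hi
  rw [Finset.mem_sdiff] at hi
  have h2 : i ≠ (⟨q, hq⟩ : Fin n) := fun h => hi.2 (h ▸ hS)
  have h3 : (i : ℕ) ≠ q := fun h => h2 (Fin.ext h)
  simp [h3]

lemma card_univ_filter_lt {n c : ℕ} (hc : c ≤ n) :
    (Finset.univ.filter (fun i : Fin n => (i:ℕ) < c)).card = c := by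
  have he : Finset.univ.filter (fun i : Fin n => (i:ℕ) < c)
      = (Finset.range c).attachFin (fun m hm => lt_of_lt_of_le (Finset.mem_range.1 hm) hc) := by
    ext i; simp [Finset.mem_attachFin]
  rw [he, Finset.card_attachFin, Finset.card_range]

lemma card_univ_filter_gt {n c : ℕ} (hc : c < n) :
    (Finset.univ.filter (fun i : Fin n => c < (i:ℕ))).card = n - c - 1 := by
  have he : Finset.univ.filter (fun i : Fin n => c < (i:ℕ))
      = (Finset.Ico (c+1) n).attachFin (fun m hm => (Finset.mem_Ico.1 hm).2) := by
    ext i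
    simp only [Finset.mem_filter, Finset.mem_univ, true_and, Finset.mem_attachFin,
      Finset.mem_Ico]
    have := i.isLt
    omega
  rw [he, Finset.card_attachFin, Nat.card_Ico]
  omega

lemma delWord_zo {n q : ℕ} (hq : q < n) (S : Finset (Fin n)) (hS : (⟨q, hq⟩ : Fin n) ∉ S) :
    delWord (fun i : Fin n => if (i:ℕ) = q then 1 else 0) S
      = zo (q - (S.filter (fun i : Fin n => (i:ℕ) < q)).card)
           (n - q - 1 - (S.filter (fun i : Fin n => q < (i:ℕ))).card) := by
  classical
  have hqC : (⟨q,hq⟩ : Fin n) ∈ Finset.univ \ S := by simp [hS]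
  have hlt : ((Finset.univ \ S).filter (· < (⟨q,hq⟩ : Fin n))).card
      = q - (S.filter (fun i : Fin n => (i:ℕ) < q)).card := by
    have he : (Finset.univ \ S).filter (· < (⟨q,hq⟩ : Fin n))
        = (Finset.univ.filter (fun i : Fin n => (i:ℕ) < q)) \ (S.filter (fun i : Fin n => (i:ℕ) < q)) := by
      ext i
      simp only [Finset.mem_filter, Finset.mem_sdiff, Finset.mem_univ, true_and, Fin.lt_def]
      tauto
    rw [he, Finset.card_sdiff_of_subset (Finset.filter_subset_filter _ (Finset.subset_univ S)),
      card_univ_filter_lt (le_of_lt hq)]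
  have hgt : ((Finset.univ \ S).filter ((⟨q,hq⟩ : Fin n) < ·)).card
      = n - q - 1 - (S.filter (fun i : Fin n => q < (i:ℕ))).card := by
    have he : (Finset.univ \ S).filter ((⟨q,hq⟩ : Fin n) < ·)
        = (Finset.univ.filter (fun i : Fin n => q < (i:ℕ))) \ (S.filter (fun i : Fin n => q < (i:ℕ))) := by
      ext i
      simp only [Finset.mem_filter, Finset.mem_sdiff, Finset.mem_univ, true_and, Fin.lt_def]
      tauto
    rw [he, Finset.card_sdiff_of_subset (Finset.filter_subset_filter _ (Finset.subset_univ S)),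
      card_univ_filter_gt hq]
  unfold delWord
  rw [sort_split (Finset.univ \ S) ⟨q,hq⟩ hqC, List.map_append, List.map_cons,
    map_sort_zero _ _ (fun i hi => by
      have h1 : i < (⟨q, hq⟩ : Fin n) := (Finset.mem_filter.1 hi).2
      have h3 : (i : ℕ) ≠ q := Nat.ne_of_lt h1
      simp [h3]),
    map_sort_zero _ _ (fun i hi => by
      have h1 : (⟨q, hq⟩ : Fin n) < i := (Finset.mem_filter.1 hi).2
      have h3 : (i : ℕ) ≠ q := Nat.ne_of_gt h1
      simp [h3]), hlt, hgt]
  simp [zo]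

lemma filter_attachFin {n : ℕ} (s : Finset ℕ) (h : ∀ m ∈ s, m < n) (P : ℕ → Prop)
    [DecidablePred P] :
    ((s.attachFin h).filter (fun i : Fin n => P (i:ℕ))).card = (s.filter P).card := by
  rw [← Finset.card_attachFin (s.filter P) (fun m hm => h m (Finset.mem_filter.1 hm).1)]
  congr 1
  ext i
  simp [Finset.mem_attachFin]

lemma card_small_subsets {α : Type*} [DecidableEq α] [Fintype α] (B : Finset α) (t : ℕ) :
    (Finset.univ.filter (fun S : Finset α => S.card ≤ t ∧ S ⊆ B)).card = V₂ B.card t := by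
  have he : Finset.univ.filter (fun S : Finset α => S.card ≤ t ∧ S ⊆ B)
      = (Finset.range (t+1)).biUnion (fun i => B.powersetCard i) := by
    ext S
    simp only [Finset.mem_filter, Finset.mem_univ, true_and, Finset.mem_biUnion,
      Finset.mem_range, Finset.mem_powersetCard]
    constructor
    · rintro ⟨h1, h2⟩; exact ⟨S.card, by omega, h2, rfl⟩
    · rintro ⟨i, hi, h2, rfl⟩; exact ⟨by omega, h2⟩
  rw [he, Finset.card_biUnion]
  · simp [V₂, Finset.card_powersetCard]
  · intro i _ j _ hij
    rw [Function.onFun, Finset.disjoint_left]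
    intro S h1 h2
    rw [Finset.mem_powersetCard] at h1 h2
    exact hij (h1.2.symm.trans h2.2)

lemma card_D {n t : ℕ} (P : Fin n → Prop) [DecidablePred P] (m : ℕ)
    (hm : (Finset.univ.filter (fun i : Fin n => ¬ P i)).card = m) :
    (Finset.univ.filter (fun S : Finset (Fin n) => S.card ≤ t ∧ ∃ i ∈ S, P i)).card
      = V₂ n t - V₂ m t := by
  have keyL := card_small_subsets (Finset.univ.filter (fun i : Fin n => ¬ P i)) t
  have keyU := card_small_subsets (Finset.univ : Finset (Fin n)) t
  rw [Finset.card_univ, Fintype.card_fin] at keyU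
  rw [hm] at keyL
  have hUeq : Finset.univ.filter (fun S : Finset (Fin n) => S.card ≤ t ∧ ∃ i ∈ S, P i)
      = (Finset.univ.filter (fun S : Finset (Fin n) => S.card ≤ t ∧ S ⊆ Finset.univ)) \
        (Finset.univ.filter (fun S : Finset (Fin n) =>
          S.card ≤ t ∧ S ⊆ Finset.univ.filter (fun i : Fin n => ¬ P i))) := by
    ext S
    simp only [Finset.mem_filter, Finset.mem_univ, true_and, Finset.mem_sdiff]
    constructor
    · rintro ⟨h1, i, hi, hPi⟩
      refine ⟨⟨h1, Finset.subset_univ S⟩, ?_⟩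
      rintro ⟨-, hsub⟩
      exact (Finset.mem_filter.1 (hsub hi)).2 hPi
    · rintro ⟨⟨h1, -⟩, h2⟩
      refine ⟨h1, ?_⟩
      by_contra hno
      push_neg at hno
      exact h2 ⟨h1, fun i hi =>
        Finset.mem_filter.2 ⟨Finset.mem_univ _, fun hPi => hno i hi hPi⟩⟩
  rw [hUeq, Finset.card_sdiff_of_subset, keyU, keyL]
  intro S hS
  rw [Finset.mem_filter] at hS ⊢
  exact ⟨hS.1, hS.2.1, Finset.subset_univ S⟩

lemma card_univ_filter_Ico {n a b : ℕ} (hb : b ≤ n) :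
    (Finset.univ.filter (fun i : Fin n => a ≤ (i:ℕ) ∧ (i:ℕ) < b)).card = b - a := by
  have he : Finset.univ.filter (fun i : Fin n => a ≤ (i:ℕ) ∧ (i:ℕ) < b)
      = (Finset.Ico a b).attachFin (fun m hm => lt_of_lt_of_le (Finset.mem_Ico.1 hm).2 hb) := by
    ext i
    simp [Finset.mem_attachFin, Finset.mem_Ico]
  rw [he, Finset.card_attachFin, Nat.card_Ico]

end DelTight

open DelTight in
/-- Tightness for deletion vectors of weight at most `t`:
`x = 0^{⌈n/2⌉-1} 1 0^{⌊n/2⌋}` has its single `1` at (0-indexed) position `⌈n/2⌉ - 1 = (n+1)/2 - 1`,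
and `x' = 0^{⌈n/2⌉} 1 0^{⌊n/2⌋-1}` has its single `1` at position `⌈n/2⌉ = (n+1)/2`. -/
theorem deletion_vectors_at_most_t_tightness
    (t n : ℕ) (ht : 1 ≤ t) (hn : 2 * t + 2 ≤ n) :
    ∃ D D' : Finset (Finset (Fin n)),
      (∀ S ∈ D, S.card ≤ t) ∧ (∀ S ∈ D', S.card ≤ t) ∧
      D.card = V₂ n t - V₂ ((n + 1) / 2 - 1) t ∧
      D'.card = V₂ n t - V₂ ((n + 1) / 2 - 1) t ∧
      D.image (delWord (fun i : Fin n => if (i : ℕ) = (n + 1) / 2 - 1 then (1 : Fin 2) else 0)) =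
        D'.image (delWord (fun i : Fin n => if (i : ℕ) = (n + 1) / 2 then (1 : Fin 2) else 0)) := by
  set p : ℕ := (n + 1) / 2 - 1 with hp
  have hq2 : (n + 1) / 2 = p + 1 := by omega
  rw [hq2]
  have htp : t ≤ p := by omega
  have hpn : p < n := by omega
  have hp1n : p + 1 < n := by omega
  have hptn : p + t + 1 ≤ n := by omega
  have h1n : 1 < n := by omega
  have hl1 : 2 * p + 2 - n ≤ 1 := by omega
  refine ⟨Finset.univ.filter (fun S : Finset (Fin n) => S.card ≤ t ∧ ∃ i ∈ S, p ≤ (i:ℕ)),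
    Finset.univ.filter (fun S : Finset (Fin n) =>
      S.card ≤ t ∧ ∃ i ∈ S, 2*p+2-n ≤ (i:ℕ) ∧ (i:ℕ) < p + 2), ?_, ?_, ?_, ?_, ?_⟩
  · intro S hS; exact (Finset.mem_filter.1 hS).2.1
  · intro S hS; exact (Finset.mem_filter.1 hS).2.1
  · refine DelTight.card_D _ p ?_
    have he : (Finset.univ.filter (fun i : Fin n => ¬ p ≤ (i:ℕ)))
        = Finset.univ.filter (fun i : Fin n => (i:ℕ) < p) := by
      ext i; simp only [Finset.mem_filter, Finset.mem_univ, true_and]; omega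
    rw [he, DelTight.card_univ_filter_lt (le_of_lt hpn)]
  · refine DelTight.card_D _ p ?_
    have h1 := Finset.card_filter_add_card_filter_not
      (s := (Finset.univ : Finset (Fin n)))
      (p := fun i : Fin n => 2*p+2-n ≤ (i:ℕ) ∧ (i:ℕ) < p + 2)
    rw [DelTight.card_univ_filter_Ico (by omega : p + 2 ≤ n), Finset.card_univ,
      Fintype.card_fin] at h1
    omega
  · -- image equality
    ext w
    simp only [Finset.mem_image, Finset.mem_filter, Finset.mem_univ, true_and]
    constructor
    · rintro ⟨S, ⟨hcard, i₀, hi₀S, hi₀p⟩, rfl⟩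
      by_cases hmem : (⟨p, hpn⟩ : Fin n) ∈ S
      · -- 1 at p is deleted : all-zero output
        have hs1 : 1 ≤ S.card := Finset.card_pos.2 ⟨_, hmem⟩
        have hb : ∀ m ∈ Finset.Ico (p+1) (p+1+S.card), m < n := by
          intro m hm; rw [Finset.mem_Ico] at hm; omega
        have hmem' : (⟨p+1, hp1n⟩ : Fin n) ∈ (Finset.Ico (p+1) (p+1+S.card)).attachFin hb :=
          (Finset.mem_attachFin hb).2 (Finset.mem_Ico.2
            (by omega : p + 1 ≤ p + 1 ∧ p + 1 < p + 1 + S.card))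
        refine ⟨(Finset.Ico (p+1) (p+1+S.card)).attachFin hb,
          ⟨?_, ⟨p+1, hp1n⟩, hmem',
            (by omega : 2*p+2-n ≤ p+1 ∧ p+1 < p+2)⟩, ?_⟩
        · rw [Finset.card_attachFin, Nat.card_Ico]; omega
        · rw [DelTight.delWord_rep hp1n _ hmem', DelTight.delWord_rep hpn S hmem,
            Finset.card_attachFin, Nat.card_Ico]
          congr 1
          omega
      · -- 1 survives
        have hi0ne : (i₀ : ℕ) ≠ p := fun h => hmem (by
          have : i₀ = (⟨p, hpn⟩ : Fin n) := Fin.ext h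
          exact this ▸ hi₀S)
        set k := (S.filter (fun i : Fin n => (i:ℕ) < p)).card with hk
        set k₂ := (S.filter (fun i : Fin n => p < (i:ℕ))).card with hk2
        have hkk2 : k + k₂ = S.card := by
          have h1 := Finset.card_filter_add_card_filter_not
            (s := S) (p := fun i : Fin n => (i:ℕ) < p)
          have h2 : S.filter (fun i : Fin n => ¬ (i:ℕ) < p)
              = S.filter (fun i : Fin n => p < (i:ℕ)) := by
            apply Finset.filter_congr
            intro i hiS
            have hine : i ≠ (⟨p, hpn⟩ : Fin n) := fun h => hmem (h ▸ hiS)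
            have hne : (i:ℕ) ≠ p := fun hh => hine (Fin.ext hh)
            constructor
            · intro h; omega
            · intro h; omega
          rw [h2] at h1
          omega
        have hk2pos : 1 ≤ k₂ := Finset.card_pos.2
          ⟨i₀, Finset.mem_filter.2 ⟨hi₀S, lt_of_le_of_ne hi₀p (Ne.symm hi0ne)⟩⟩
        have hkt : k + 1 ≤ t := by omega
        have hb : ∀ m ∈ Finset.Ico 1 (k+2) ∪ Finset.Ico (p+2) (p+1+(S.card-k)), m < n := by
          intro m hm
          rcases Finset.mem_union.1 hm with hm | hm <;> rw [Finset.mem_Ico] at hm <;> omega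
        have hnot : (⟨p+1, hp1n⟩ : Fin n)
            ∉ (Finset.Ico 1 (k+2) ∪ Finset.Ico (p+2) (p+1+(S.card-k))).attachFin hb := by
          rw [Finset.mem_attachFin]
          simp only [Finset.mem_union, Finset.mem_Ico]
          omega
        have hone : (⟨1, by omega⟩ : Fin n)
            ∈ (Finset.Ico 1 (k+2) ∪ Finset.Ico (p+2) (p+1+(S.card-k))).attachFin hb := by
          rw [Finset.mem_attachFin]
          simp only [Finset.mem_union, Finset.mem_Ico]
          omega
        have hcard' : ((Finset.Ico 1 (k+2) ∪ Finset.Ico (p+2) (p+1+(S.card-k))).attachFin hb).card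
            = S.card := by
          rw [Finset.card_attachFin, Finset.card_union_of_disjoint, Nat.card_Ico, Nat.card_Ico]
          · omega
          · rw [Finset.disjoint_left]
            intro m hm1 hm2
            rw [Finset.mem_Ico] at hm1 hm2
            omega
        refine ⟨_, ⟨by rw [hcard']; exact hcard, ⟨1, by omega⟩, hone, (by omega : 2*p+2-n ≤ 1 ∧ 1 < p+2)⟩, ?_⟩
        rw [DelTight.delWord_zo hpn S hmem, DelTight.delWord_zo hp1n _ hnot]
        have c1 : (((Finset.Ico 1 (k+2) ∪ Finset.Ico (p+2) (p+1+(S.card-k))).attachFin hb).filter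
            (fun i : Fin n => (i:ℕ) < p + 1)).card = k + 1 := by
          rw [DelTight.filter_attachFin _ hb (fun m => m < p + 1)]
          have he : (Finset.Ico 1 (k+2) ∪ Finset.Ico (p+2) (p+1+(S.card-k))).filter (· < p+1)
              = Finset.Ico 1 (k+2) := by
            ext m
            simp only [Finset.mem_filter, Finset.mem_union, Finset.mem_Ico]
            omega
          rw [he, Nat.card_Ico]
          omega
        have c2 : (((Finset.Ico 1 (k+2) ∪ Finset.Ico (p+2) (p+1+(S.card-k))).attachFin hb).filter
            (fun i : Fin n => p + 1 < (i:ℕ))).card = S.card - k - 1 := by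
          rw [DelTight.filter_attachFin _ hb (fun m => p + 1 < m)]
          have he : (Finset.Ico 1 (k+2) ∪ Finset.Ico (p+2) (p+1+(S.card-k))).filter (p+1 < ·)
              = Finset.Ico (p+2) (p+1+(S.card-k)) := by
            ext m
            simp only [Finset.mem_filter, Finset.mem_union, Finset.mem_Ico]
            omega
          rw [he, Nat.card_Ico]
          omega
        rw [c1, c2]
        rw [show p + 1 - (k + 1) = p - k from by omega,
          show n - (p+1) - 1 - (S.card - k - 1) = n - p - 1 - k₂ from by omega]
    · rintro ⟨S, ⟨hcard, i₀, hi₀S, hi₀l, hi₀u⟩, rfl⟩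
      by_cases hmem : (⟨p+1, hp1n⟩ : Fin n) ∈ S
      · have hs1 : 1 ≤ S.card := Finset.card_pos.2 ⟨_, hmem⟩
        have hb : ∀ m ∈ Finset.Ico p (p+S.card), m < n := by
          intro m hm; rw [Finset.mem_Ico] at hm; omega
        have hmem' : (⟨p, hpn⟩ : Fin n) ∈ (Finset.Ico p (p+S.card)).attachFin hb :=
          (Finset.mem_attachFin hb).2 (Finset.mem_Ico.2
            (by omega : p ≤ p ∧ p < p + S.card))
        refine ⟨(Finset.Ico p (p+S.card)).attachFin hb,
          ⟨?_, ⟨p, hpn⟩, hmem', (by omega : p ≤ p)⟩, ?_⟩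
        · rw [Finset.card_attachFin, Nat.card_Ico]; omega
        · rw [DelTight.delWord_rep hpn _ hmem', DelTight.delWord_rep hp1n S hmem,
            Finset.card_attachFin, Nat.card_Ico]
          congr 1
          omega
      · have hi0ne : (i₀ : ℕ) ≠ p + 1 := fun h => hmem (by
          have : i₀ = (⟨p+1, hp1n⟩ : Fin n) := Fin.ext h
          exact this ▸ hi₀S)
        set j := (S.filter (fun i : Fin n => (i:ℕ) < p + 1)).card with hj
        set j₂ := (S.filter (fun i : Fin n => p + 1 < (i:ℕ))).card with hj2
        have hjj2 : j + j₂ = S.card := by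
          have h1 := Finset.card_filter_add_card_filter_not
            (s := S) (p := fun i : Fin n => (i:ℕ) < p + 1)
          have h2 : S.filter (fun i : Fin n => ¬ (i:ℕ) < p + 1)
              = S.filter (fun i : Fin n => p + 1 < (i:ℕ)) := by
            apply Finset.filter_congr
            intro i hiS
            have hine : i ≠ (⟨p+1, hp1n⟩ : Fin n) := fun h => hmem (h ▸ hiS)
            have hne : (i:ℕ) ≠ p + 1 := fun hh => hine (Fin.ext hh)
            constructor
            · intro h; omega
            · intro h; omega
          rw [h2] at h1
          omega
        have hjpos : 1 ≤ j := Finset.card_pos.2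
          ⟨i₀, Finset.mem_filter.2 ⟨hi₀S, by omega⟩⟩
        have hb : ∀ m ∈ Finset.Ico 0 (j-1) ∪ Finset.Ico (p+1) (p+2+(S.card-j)), m < n := by
          intro m hm
          rcases Finset.mem_union.1 hm with hm | hm <;> rw [Finset.mem_Ico] at hm <;> omega
        have hnot : (⟨p, hpn⟩ : Fin n)
            ∉ (Finset.Ico 0 (j-1) ∪ Finset.Ico (p+1) (p+2+(S.card-j))).attachFin hb := by
          rw [Finset.mem_attachFin]
          simp only [Finset.mem_union, Finset.mem_Ico]
          omega
        have hpone : (⟨p+1, hp1n⟩ : Fin n)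
            ∈ (Finset.Ico 0 (j-1) ∪ Finset.Ico (p+1) (p+2+(S.card-j))).attachFin hb := by
          rw [Finset.mem_attachFin]
          simp only [Finset.mem_union, Finset.mem_Ico]
          omega
        have hcard' : ((Finset.Ico 0 (j-1) ∪ Finset.Ico (p+1) (p+2+(S.card-j))).attachFin hb).card
            = S.card := by
          rw [Finset.card_attachFin, Finset.card_union_of_disjoint, Nat.card_Ico, Nat.card_Ico]
          · omega
          · rw [Finset.disjoint_left]
            intro m hm1 hm2
            rw [Finset.mem_Ico] at hm1 hm2
            omega
        refine ⟨_, ⟨by rw [hcard']; exact hcard, ⟨p+1, hp1n⟩, hpone, (by omega : p ≤ p+1)⟩, ?_⟩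
        rw [DelTight.delWord_zo hpn _ hnot, DelTight.delWord_zo hp1n S hmem]
        have c1 : (((Finset.Ico 0 (j-1) ∪ Finset.Ico (p+1) (p+2+(S.card-j))).attachFin hb).filter
            (fun i : Fin n => (i:ℕ) < p)).card = j - 1 := by
          rw [DelTight.filter_attachFin _ hb (fun m => m < p)]
          have he : (Finset.Ico 0 (j-1) ∪ Finset.Ico (p+1) (p+2+(S.card-j))).filter (· < p)
              = Finset.Ico 0 (j-1) := by
            ext m
            simp only [Finset.mem_filter, Finset.mem_union, Finset.mem_Ico]
            omega
          rw [he, Nat.card_Ico]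
          omega
        have c2 : (((Finset.Ico 0 (j-1) ∪ Finset.Ico (p+1) (p+2+(S.card-j))).attachFin hb).filter
            (fun i : Fin n => p < (i:ℕ))).card = S.card - j + 1 := by
          rw [DelTight.filter_attachFin _ hb (fun m => p < m)]
          have he : (Finset.Ico 0 (j-1) ∪ Finset.Ico (p+1) (p+2+(S.card-j))).filter (p < ·)
              = Finset.Ico (p+1) (p+2+(S.card-j)) := by
            ext m
            simp only [Finset.mem_filter, Finset.mem_union, Finset.mem_Ico]
            omega
          rw [he, Nat.card_Ico]
          omega
        rw [c1, c2]
        rw [show p - (j - 1) = p + 1 - j from by omega,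
          show n - p - 1 - (S.card - j + 1) = n - (p+1) - 1 - j₂ from by omega]
end

section
/- Let t ≥ 1 and n ≥ 2t+2 be integers, and consider the binary words x = 0^{⌈n/2⌉−1} 1 0^{⌊n/2⌋} and x' = 0^{⌈n/2⌉} 1 0^{⌊n/2⌋−1} of length n. Then there exist sets D and D' of deletion vectors for length-n words, each vector of weight exactly t, with |D| = |D'| = C(n,t) − C(⌈n/2⌉−1, t), such that the output set of D on x equals the output set of D' on x'. In particular, the bound of the uniqueness theorem for deletion vectors of weight exactly t is tight. -/
namespace DelTight

open Finset

theorem countP_sort {n : ℕ} (s : Finset (Fin n)) (P : Fin n → Prop) [DecidablePred P] :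
    (s.sort (· ≤ ·)).countP (fun i => decide (P i)) = (s.filter P).card := by
  rw [(Finset.sort_perm_toList s (· ≤ ·)).countP_eq, Finset.toList,
    ← Multiset.coe_countP, Multiset.coe_toList, Multiset.countP_eq_card_filter]
  rfl

/-- the indicator word with a single `1` at value-position `c` -/
def ind (n c : ℕ) : Fin n → Fin 2 := fun i => if (i : ℕ) = c then 1 else 0

/-- word of length `m` with single 1 at position `a` -/
def zw (a m : ℕ) : List (Fin 2) :=
  List.replicate a 0 ++ 1 :: List.replicate (m - 1 - a) 0

lemma map_ind_of_not_mem {n : ℕ} (c : ℕ) (l : List (Fin n)) (h : ∀ i ∈ l, (i : ℕ) ≠ c) :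
    l.map (ind n c) = List.replicate l.length 0 := by
  induction l with
  | nil => rfl
  | cons b tl ih =>
    simp only [List.map_cons, List.length_cons, List.replicate_succ]
    rw [ih (fun i hi => h i (List.mem_cons_of_mem _ hi))]
    simp [ind, h b (List.mem_cons_self)]

lemma map_ind_of_mem {n : ℕ} (c : ℕ) (l : List (Fin n)) (hs : l.Pairwise (· < ·))
    (i0 : Fin n) (hi : i0 ∈ l) (hc : (i0 : ℕ) = c) :
    l.map (ind n c) =
      List.replicate (l.countP (fun i : Fin n => decide ((i : ℕ) < c))) 0 ++
        1 :: List.replicate (l.countP (fun i : Fin n => decide (c < (i : ℕ)))) 0 := by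
  induction l with
  | nil => simp at hi
  | cons b tl ih =>
    have hs' := List.pairwise_cons.mp hs
    rcases List.mem_cons.mp hi with hb | htl
    · subst hb
      have h1 : ∀ i ∈ tl, c < (i : ℕ) := fun i hi => hc ▸ hs'.1 i hi
      have h2 : tl.countP (fun i : Fin n => decide ((i : ℕ) < c)) = 0 := by
        rw [List.countP_eq_zero]
        intro i hi
        simpa using Nat.lt_asymm (h1 i hi)
      have h3 : tl.countP (fun i : Fin n => decide (c < (i : ℕ))) = tl.length := by
        rw [List.countP_eq_length]
        intro i hi
        simpa using h1 i hi
      simp only [List.map_cons, List.countP_cons, h2, h3, hc]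
      simp only [decide_eq_true_eq, lt_irrefl, if_false, ite_false]
      rw [map_ind_of_not_mem c tl (fun i hi => Nat.ne_of_gt (h1 i hi))]
      simp [ind, hc, List.replicate_succ]
    · have hblt : (b : ℕ) < c := hc ▸ hs'.1 i0 htl
      have := ih hs'.2 htl
      simp only [List.map_cons, List.countP_cons, this]
      have hb0 : ind n c b = 0 := by simp [ind, Nat.ne_of_lt hblt]
      simp only [hb0, decide_eq_true_eq, hblt, if_true, Nat.lt_asymm hblt, if_false]
      rw [List.replicate_succ]
      simp


lemma card_filter_lt {n : ℕ} (c : ℕ) (hc : c ≤ n) :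
    ((univ : Finset (Fin n)).filter fun i : Fin n => (i : ℕ) < c).card = c := by
  rcases eq_or_lt_of_le hc with rfl | h
  · rw [Finset.filter_true_of_mem (fun i _ => i.isLt)]
    simp
  · have he : ((univ : Finset (Fin n)).filter fun i : Fin n => (i : ℕ) < c) = Finset.Iio ⟨c, h⟩ := by
      ext i; simp [Fin.lt_def]
    rw [he, Fin.card_Iio]

lemma card_filter_Ico {n : ℕ} (a b : ℕ) (hab : a ≤ b) (hb : b ≤ n) :
    ((univ : Finset (Fin n)).filter fun i : Fin n => a ≤ (i : ℕ) ∧ (i : ℕ) < b).card = b - a := by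
  have he : ((univ : Finset (Fin n)).filter fun i : Fin n => a ≤ (i : ℕ) ∧ (i : ℕ) < b)
      = (univ.filter fun i : Fin n => (i : ℕ) < b) \ (univ.filter fun i : Fin n => (i : ℕ) < a) := by
    ext i; simp; omega
  rw [he, card_sdiff_of_subset (by intro i hi; simp only [mem_filter] at hi ⊢; exact ⟨hi.1, by omega⟩),
    card_filter_lt a (le_trans hab hb), card_filter_lt b hb]

lemma filter_sdiff_card {n : ℕ} (S : Finset (Fin n)) (P : Fin n → Prop) [DecidablePred P] :
    ((univ \ S).filter P).card = ((univ : Finset (Fin n)).filter P).card - (S.filter P).card := by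
  have he : (univ \ S).filter P = (univ : Finset (Fin n)).filter P \ S.filter P := by
    ext i; simp; tauto
  rw [he, card_sdiff_of_subset (Finset.filter_subset_filter P (Finset.subset_univ S))]

lemma delWord_of_mem {n : ℕ} (S : Finset (Fin n)) (c : ℕ) (hc : c < n)
    (h : (⟨c, hc⟩ : Fin n) ∈ S) :
    delWord (ind n c) S = List.replicate (n - S.card) 0 := by
  unfold delWord
  rw [map_ind_of_not_mem]
  · rw [Finset.length_sort, card_sdiff_of_subset (subset_univ S), card_univ, Fintype.card_fin]
  · intro i hi hic
    rw [Finset.mem_sort, mem_sdiff] at hi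
    have : i = ⟨c, hc⟩ := Fin.eq_mk_iff_val_eq.mpr hic
    exact hi.2 (this ▸ h)

lemma delWord_of_not_mem {n : ℕ} (S : Finset (Fin n)) (c : ℕ) (hc : c < n)
    (h : (⟨c, hc⟩ : Fin n) ∉ S) :
    delWord (ind n c) S =
      zw (((univ \ S).filter fun i : Fin n => (i : ℕ) < c).card) (n - S.card) := by
  unfold delWord zw
  rw [map_ind_of_mem c _ (List.sortedLT_iff_pairwise.mp (Finset.sortedLT_sort _)) ⟨c, hc⟩
    (by rw [Finset.mem_sort, mem_sdiff]; exact ⟨mem_univ _, h⟩) rfl]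
  rw [countP_sort (univ \ S) (fun i => (i : ℕ) < c), countP_sort (univ \ S) (fun i => c < (i : ℕ))]
  congr 2
  -- count above = total - 1 - count below
  have hcardA : (univ \ S).card = n - S.card := by
    rw [card_sdiff_of_subset (subset_univ S), card_univ, Fintype.card_fin]
  have hle : ((univ \ S).filter fun i : Fin n => (i : ℕ) ≤ c)
      = insert ⟨c, hc⟩ ((univ \ S).filter fun i : Fin n => (i : ℕ) < c) := by
    ext i
    simp only [mem_filter, mem_insert, mem_sdiff, mem_univ, true_and]
    constructor
    · rintro ⟨hiS, hile⟩
      rcases lt_or_eq_of_le hile with h' | h'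
      · exact Or.inr ⟨hiS, h'⟩
      · exact Or.inl (Fin.eq_mk_iff_val_eq.mpr h')
    · rintro (rfl | ⟨hiS, hlt⟩)
      · exact ⟨h, le_refl _⟩
      · exact ⟨hiS, le_of_lt hlt⟩
  have hnotmem : (⟨c, hc⟩ : Fin n) ∉ (univ \ S).filter fun i : Fin n => (i : ℕ) < c := by
    simp
  have hgt : ((univ \ S).filter fun i : Fin n => c < (i : ℕ))
      = (univ \ S) \ ((univ \ S).filter fun i : Fin n => (i : ℕ) ≤ c) := by
    ext i
    simp only [mem_filter, mem_sdiff, mem_univ, true_and, not_and, not_le]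
    constructor
    · rintro ⟨h1, h2⟩; exact ⟨h1, fun _ => h2⟩
    · rintro ⟨h1, h2⟩; exact ⟨h1, h2 h1⟩
  rw [hgt, card_sdiff_of_subset (filter_subset _ _), hle, card_insert_of_notMem hnotmem, hcardA]
  congr 1
  omega


lemma card_filter_le {n : ℕ} (c : ℕ) (hc : c ≤ n) :
    ((univ : Finset (Fin n)).filter fun i : Fin n => c ≤ (i : ℕ)).card = n - c := by
  have h := Finset.card_filter_add_card_filter_not
    (s := (univ : Finset (Fin n))) (p := fun i : Fin n => (i : ℕ) < c)
  rw [card_filter_lt c hc, card_univ, Fintype.card_fin] at h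
  have he : ((univ : Finset (Fin n)).filter fun i : Fin n => ¬ (i : ℕ) < c)
      = (univ : Finset (Fin n)).filter fun i : Fin n => c ≤ (i : ℕ) := by
    ext i; simp [not_lt]
  rw [he] at h
  omega

end DelTight

open Finset DelTight in
/-- Tightness for deletion vectors of weight exactly `t`:
`x = 0^{⌈n/2⌉-1} 1 0^{⌊n/2⌋}` has its single `1` at (0-indexed) position `⌈n/2⌉ - 1 = (n+1)/2 - 1`,
and `x' = 0^{⌈n/2⌉} 1 0^{⌊n/2⌋-1}` has its single `1` at position `⌈n/2⌉ = (n+1)/2`. -/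
theorem deletion_vectors_exactly_t_tightness
    (t n : ℕ) (ht : 1 ≤ t) (hn : 2 * t + 2 ≤ n) :
    ∃ D D' : Finset (Finset (Fin n)),
      (∀ S ∈ D, S.card = t) ∧ (∀ S ∈ D', S.card = t) ∧
      D.card = n.choose t - ((n + 1) / 2 - 1).choose t ∧
      D'.card = n.choose t - ((n + 1) / 2 - 1).choose t ∧
      D.image (delWord (fun i : Fin n => if (i : ℕ) = (n + 1) / 2 - 1 then (1 : Fin 2) else 0)) =
        D'.image (delWord (fun i : Fin n => if (i : ℕ) = (n + 1) / 2 then (1 : Fin 2) else 0)) := by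
  set p : ℕ := (n + 1) / 2 - 1 with hp_def
  have hv : (n + 1) / 2 = p + 1 := by omega
  have hp_lt : p < n := by omega
  have hp1_lt : p + 1 < n := by omega
  have ht_le_p : t ≤ p := by omega
  have hpt : p + t + 1 ≤ n := by omega
  have hn_le : n ≤ 2 * p + 2 := by omega
  have hn_ge : 2 * p + 1 ≤ n := by omega
  -- the two words
  have hx : (fun i : Fin n => if (i : ℕ) = p then (1 : Fin 2) else 0) = ind n p := rfl
  have hx' : (fun i : Fin n => if (i : ℕ) = (n + 1) / 2 then (1 : Fin 2) else 0)
      = ind n (p + 1) := by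
    funext i; rw [hv]; rfl
  rw [hx']
  -- the excluded sets
  set Lo : Finset (Fin n) := univ.filter (fun i : Fin n => (i : ℕ) < p) with hLo_def
  set Hi : Finset (Fin n) :=
    univ.filter (fun i : Fin n => p + 1 < (i : ℕ) ∨ ((i : ℕ) = 0 ∧ n < 2 * p + 2)) with hHi_def
  have hLo_card : Lo.card = p := card_filter_lt p (le_of_lt hp_lt)
  have hHi_card : Hi.card = p := by
    by_cases hpar : n = 2 * p + 2
    · have he : Hi = univ.filter (fun i : Fin n => p + 2 ≤ (i : ℕ)) := by
        ext i; simp only [hHi_def, mem_filter, mem_univ, true_and]; omega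
      rw [he, DelTight.card_filter_le (p + 2) (by omega)]; omega
    · have hodd : n = 2 * p + 1 := by omega
      have he : Hi = insert (⟨0, by omega⟩ : Fin n)
          (univ.filter (fun i : Fin n => p + 2 ≤ (i : ℕ))) := by
        ext i
        simp only [hHi_def, mem_filter, mem_univ, true_and, mem_insert, Fin.ext_iff]
        omega
      rw [he, card_insert_of_notMem (by simp), DelTight.card_filter_le (p + 2) (by omega)]
      omega
  refine ⟨univ.powersetCard t \ Lo.powersetCard t,
    univ.powersetCard t \ Hi.powersetCard t, ?_, ?_, ?_, ?_, ?_⟩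
  · intro S hS
    exact (mem_powersetCard.mp (mem_sdiff.mp hS).1).2
  · intro S hS
    exact (mem_powersetCard.mp (mem_sdiff.mp hS).1).2
  · rw [card_sdiff_of_subset (powersetCard_mono (subset_univ Lo)), card_powersetCard,
      card_powersetCard, card_univ, Fintype.card_fin, hLo_card]
  · rw [card_sdiff_of_subset (powersetCard_mono (subset_univ Hi)), card_powersetCard,
      card_powersetCard, card_univ, Fintype.card_fin, hHi_card]
  · -- output sets both equal O
    have claim1 : (univ.powersetCard t \ Lo.powersetCard t).image (delWord (ind n p)) =
        insert (List.replicate (n - t) (0 : Fin 2))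
          ((Finset.Icc (p + 1 - t) p).image fun a => zw a (n - t)) := by
      ext l
      simp only [Finset.mem_image, mem_insert]
      constructor
      · rintro ⟨S, hS, rfl⟩
        obtain ⟨h1, h2⟩ := mem_sdiff.mp hS
        have hcard : S.card = t := (mem_powersetCard.mp h1).2
        have hnsub : ¬ S ⊆ Lo := fun hsub => h2 (mem_powersetCard.mpr ⟨hsub, hcard⟩)
        by_cases hm : (⟨p, hp_lt⟩ : Fin n) ∈ S
        · left; rw [delWord_of_mem S p hp_lt hm, hcard]
        · right
          rw [delWord_of_not_mem S p hp_lt hm, hcard]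
          refine ⟨_, ?_, rfl⟩
          rw [filter_sdiff_card, card_filter_lt p (le_of_lt hp_lt)]
          have hj_le : (S.filter fun i : Fin n => (i : ℕ) < p).card ≤ t :=
            hcard ▸ card_filter_le _ _
          have hj_ne : (S.filter fun i : Fin n => (i : ℕ) < p).card ≠ t := by
            intro hjt
            apply hnsub
            have hfe : S.filter (fun i : Fin n => (i : ℕ) < p) = S :=
              Finset.eq_of_subset_of_card_le (filter_subset _ _) (by omega)
            intro i hi
            rw [← hfe] at hi
            simp only [hLo_def, mem_filter, mem_univ, true_and]
            exact (Finset.mem_filter.mp hi).2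
          rw [Finset.mem_Icc]
          omega
      · rintro (rfl | hzw)
        · -- the all-zero word
          refine ⟨univ.filter (fun i : Fin n => p ≤ (i : ℕ) ∧ (i : ℕ) < p + t), ?_, ?_⟩
          · rw [mem_sdiff]
            have hcard : (univ.filter
                (fun i : Fin n => p ≤ (i : ℕ) ∧ (i : ℕ) < p + t)).card = t := by
              rw [card_filter_Ico p (p + t) (by omega) (by omega)]; omega
            refine ⟨mem_powersetCard.mpr ⟨subset_univ _, hcard⟩, ?_⟩
            intro hmem
            have hsub := (mem_powersetCard.mp hmem).1
            have : (⟨p, hp_lt⟩ : Fin n) ∈ Lo := hsub (by simp; omega)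
            simp [hLo_def] at this
          · rw [delWord_of_mem _ p hp_lt (by simp; omega),
              card_filter_Ico p (p + t) (by omega) (by omega)]
            congr 1; omega
        · obtain ⟨a, ha, rfl⟩ := hzw
          rw [Finset.mem_Icc] at ha
          refine ⟨univ.filter (fun i : Fin n =>
            (a ≤ (i : ℕ) ∧ (i : ℕ) < p) ∨
              (p + 1 ≤ (i : ℕ) ∧ (i : ℕ) < p + 1 + (t - (p - a)))), ?_, ?_⟩
          · rw [mem_sdiff]
            have hdisj : Disjoint
                (univ.filter (fun i : Fin n => a ≤ (i : ℕ) ∧ (i : ℕ) < p))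
                (univ.filter (fun i : Fin n =>
                  p + 1 ≤ (i : ℕ) ∧ (i : ℕ) < p + 1 + (t - (p - a)))) := by
              rw [Finset.disjoint_left]
              intro i hi1 hi2
              simp only [mem_filter] at hi1 hi2
              omega
            have hcard : (univ.filter (fun i : Fin n =>
                (a ≤ (i : ℕ) ∧ (i : ℕ) < p) ∨
                  (p + 1 ≤ (i : ℕ) ∧ (i : ℕ) < p + 1 + (t - (p - a))))).card = t := by
              rw [Finset.filter_or, card_union_of_disjoint hdisj,
                card_filter_Ico a p (by omega) (by omega),
                card_filter_Ico (p + 1) (p + 1 + (t - (p - a))) (by omega) (by omega)]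
              omega
            refine ⟨mem_powersetCard.mpr ⟨subset_univ _, hcard⟩, ?_⟩
            intro hmem
            have hsub := (mem_powersetCard.mp hmem).1
            have : (⟨p + 1, hp1_lt⟩ : Fin n) ∈ Lo := hsub (by simp; omega)
            simp [hLo_def] at this
          · have hpa : (⟨p, hp_lt⟩ : Fin n) ∉ univ.filter (fun i : Fin n =>
                (a ≤ (i : ℕ) ∧ (i : ℕ) < p) ∨
                  (p + 1 ≤ (i : ℕ) ∧ (i : ℕ) < p + 1 + (t - (p - a)))) := by
              simp
            rw [delWord_of_not_mem _ p hp_lt hpa]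
            have hfilt : ((univ.filter (fun i : Fin n =>
                (a ≤ (i : ℕ) ∧ (i : ℕ) < p) ∨
                  (p + 1 ≤ (i : ℕ) ∧ (i : ℕ) < p + 1 + (t - (p - a))))).filter
                    (fun i : Fin n => (i : ℕ) < p))
                = univ.filter (fun i : Fin n => a ≤ (i : ℕ) ∧ (i : ℕ) < p) := by
              ext i
              simp only [mem_filter, mem_univ, true_and]
              omega
            rw [filter_sdiff_card, hfilt, card_filter_lt p (le_of_lt hp_lt),
              card_filter_Ico a p (by omega) (by omega)]
            have hcard : (univ.filter (fun i : Fin n =>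
                (a ≤ (i : ℕ) ∧ (i : ℕ) < p) ∨
                  (p + 1 ≤ (i : ℕ) ∧ (i : ℕ) < p + 1 + (t - (p - a))))).card = t := by
              rw [Finset.filter_or, card_union_of_disjoint (by
                  rw [Finset.disjoint_left]
                  intro i hi1 hi2
                  simp only [mem_filter] at hi1 hi2
                  omega),
                card_filter_Ico a p (by omega) (by omega),
                card_filter_Ico (p + 1) (p + 1 + (t - (p - a))) (by omega) (by omega)]
              omega
            rw [hcard]
            congr 1
            omega
    have claim2 : (univ.powersetCard t \ Hi.powersetCard t).image (delWord (ind n (p + 1))) =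
        insert (List.replicate (n - t) (0 : Fin 2))
          ((Finset.Icc (p + 1 - t) p).image fun a => zw a (n - t)) := by
      ext l
      simp only [Finset.mem_image, mem_insert]
      constructor
      · rintro ⟨S, hS, rfl⟩
        obtain ⟨h1, h2⟩ := mem_sdiff.mp hS
        have hcard : S.card = t := (mem_powersetCard.mp h1).2
        have hnsub : ¬ S ⊆ Hi := fun hsub => h2 (mem_powersetCard.mpr ⟨hsub, hcard⟩)
        by_cases hm : (⟨p + 1, hp1_lt⟩ : Fin n) ∈ S
        · left; rw [delWord_of_mem S (p + 1) hp1_lt hm, hcard]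
        · right
          rw [delWord_of_not_mem S (p + 1) hp1_lt hm, hcard]
          refine ⟨_, ?_, rfl⟩
          rw [filter_sdiff_card, card_filter_lt (p + 1) (by omega)]
          have hj_le : (S.filter fun i : Fin n => (i : ℕ) < p + 1).card ≤ t :=
            hcard ▸ card_filter_le _ _
          have hj_pos : 1 ≤ (S.filter fun i : Fin n => (i : ℕ) < p + 1).card := by
            rcases Finset.eq_empty_or_nonempty
                (S.filter fun i : Fin n => (i : ℕ) < p + 1) with hemp | hne
            · exfalso
              apply hnsub
              intro i hi
              have hige : ¬ (i : ℕ) < p + 1 := by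
                intro hlt
                exact Finset.notMem_empty i (hemp ▸ Finset.mem_filter.mpr ⟨hi, hlt⟩)
              have hine : (i : ℕ) ≠ p + 1 := by
                intro heq
                exact hm (by
                  have : i = (⟨p + 1, hp1_lt⟩ : Fin n) := Fin.eq_mk_iff_val_eq.mpr heq
                  exact this ▸ hi)
              simp only [hHi_def, mem_filter, mem_univ, true_and]
              left; omega
            · exact Finset.card_pos.mpr hne
          rw [Finset.mem_Icc]
          omega
      · rintro (rfl | hzw)
        · refine ⟨univ.filter (fun i : Fin n => p + 1 ≤ (i : ℕ) ∧ (i : ℕ) < p + 1 + t), ?_, ?_⟩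
          · rw [mem_sdiff]
            have hcard : (univ.filter
                (fun i : Fin n => p + 1 ≤ (i : ℕ) ∧ (i : ℕ) < p + 1 + t)).card = t := by
              rw [card_filter_Ico (p + 1) (p + 1 + t) (by omega) (by omega)]; omega
            refine ⟨mem_powersetCard.mpr ⟨subset_univ _, hcard⟩, ?_⟩
            intro hmem
            have hsub := (mem_powersetCard.mp hmem).1
            have : (⟨p + 1, hp1_lt⟩ : Fin n) ∈ Hi := hsub (by simp; omega)
            simp only [hHi_def, mem_filter, mem_univ, true_and] at this
            omega
          · rw [delWord_of_mem _ (p + 1) hp1_lt (by simp; omega),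
              card_filter_Ico (p + 1) (p + 1 + t) (by omega) (by omega)]
            congr 1; omega
        · obtain ⟨a, ha, rfl⟩ := hzw
          rw [Finset.mem_Icc] at ha
          refine ⟨univ.filter (fun i : Fin n =>
            (a ≤ (i : ℕ) ∧ (i : ℕ) < p + 1) ∨
              (p + 2 ≤ (i : ℕ) ∧ (i : ℕ) < p + 2 + (t - (p + 1 - a)))), ?_, ?_⟩
          · rw [mem_sdiff]
            have hcard : (univ.filter (fun i : Fin n =>
                (a ≤ (i : ℕ) ∧ (i : ℕ) < p + 1) ∨
                  (p + 2 ≤ (i : ℕ) ∧ (i : ℕ) < p + 2 + (t - (p + 1 - a))))).card = t := by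
              rw [Finset.filter_or, card_union_of_disjoint (by
                  rw [Finset.disjoint_left]
                  intro i hi1 hi2
                  simp only [mem_filter] at hi1 hi2
                  omega),
                card_filter_Ico a (p + 1) (by omega) (by omega),
                card_filter_Ico (p + 2) (p + 2 + (t - (p + 1 - a))) (by omega) (by omega)]
              omega
            refine ⟨mem_powersetCard.mpr ⟨subset_univ _, hcard⟩, ?_⟩
            intro hmem
            have hsub := (mem_powersetCard.mp hmem).1
            have : (⟨p, hp_lt⟩ : Fin n) ∈ Hi := hsub (by simp; omega)
            simp only [hHi_def, mem_filter, mem_univ, true_and] at this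
            omega
          · have hpa : (⟨p + 1, hp1_lt⟩ : Fin n) ∉ univ.filter (fun i : Fin n =>
                (a ≤ (i : ℕ) ∧ (i : ℕ) < p + 1) ∨
                  (p + 2 ≤ (i : ℕ) ∧ (i : ℕ) < p + 2 + (t - (p + 1 - a)))) := by
              simp
            rw [delWord_of_not_mem _ (p + 1) hp1_lt hpa]
            have hfilt : ((univ.filter (fun i : Fin n =>
                (a ≤ (i : ℕ) ∧ (i : ℕ) < p + 1) ∨
                  (p + 2 ≤ (i : ℕ) ∧ (i : ℕ) < p + 2 + (t - (p + 1 - a))))).filter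
                    (fun i : Fin n => (i : ℕ) < p + 1))
                = univ.filter (fun i : Fin n => a ≤ (i : ℕ) ∧ (i : ℕ) < p + 1) := by
              ext i
              simp only [mem_filter, mem_univ, true_and]
              omega
            rw [filter_sdiff_card, hfilt, card_filter_lt (p + 1) (by omega),
              card_filter_Ico a (p + 1) (by omega) (by omega)]
            have hcard : (univ.filter (fun i : Fin n =>
                (a ≤ (i : ℕ) ∧ (i : ℕ) < p + 1) ∨
                  (p + 2 ≤ (i : ℕ) ∧ (i : ℕ) < p + 2 + (t - (p + 1 - a))))).card = t := by
              rw [Finset.filter_or, card_union_of_disjoint (by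
                  rw [Finset.disjoint_left]
                  intro i hi1 hi2
                  simp only [mem_filter] at hi1 hi2
                  omega),
                card_filter_Ico a (p + 1) (by omega) (by omega),
                card_filter_Ico (p + 2) (p + 2 + (t - (p + 1 - a))) (by omega) (by omega)]
              omega
            rw [hcard]
            congr 1
            omega
    rw [hx, claim1, claim2]
end

section
/- Let n ≥ 4 be an integer, and consider the binary words x = 0^{⌈n/2⌉−1} 1 0^{⌊n/2⌋} and x' = 0^{⌈n/2⌉} 1 0^{⌊n/2⌋−1} of length n. Then there exist sets D and D' of deletion vectors for length-n words, each vector of weight exactly 1, with |D| = |D'| = ⌊n/2⌋ + 1, such that the output multiset of D on x equals the output multiset of D' on x'. Consequently, in the multiset error-pattern model with at most one deletion per channel, ⌊n/2⌋ + 1 channels do not suffice to uniquely determine the transmitted word (the list size satisfies L_m ≥ 2). -/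

lemma sort_sdiff_singleton {n : ℕ} (j : Fin n) :
    ((Finset.univ \ {j}).sort (· ≤ ·)) = (List.finRange n).eraseIdx (j : ℕ) := by
  have hsub : (List.finRange n).eraseIdx (j : ℕ) = (List.finRange n).erase j := by
    conv_lhs => rw [show (j : ℕ) = (List.finRange n).idxOf j by simp]
    exact List.eraseIdx_idxOf_eq_erase j (List.finRange n)
  have huniv : ((List.finRange n : List (Fin n)) : Multiset (Fin n)) = Finset.univ.val := by
    rw [← Fin.sort_univ n, Finset.sort_eq]
  refine (fun hp hs => List.Perm.eq_of_pairwise' (Finset.pairwise_sort (Finset.univ \ {j}) (· ≤ ·)) hs hp) ?_ ?_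
  · rw [← Multiset.coe_eq_coe, Finset.sort_eq, hsub, Finset.sdiff_singleton_eq_erase,
      Finset.erase_val, ← Multiset.coe_erase, huniv]
  · rw [hsub]
    exact (List.pairwise_le_finRange n).sublist List.erase_sublist

lemma map_eraseIdx' {α β : Type*} (f : α → β) (l : List α) (j : ℕ) :
    (l.eraseIdx j).map f = (l.map f).eraseIdx j := by
  rcases Nat.lt_or_ge j l.length with h | h
  · rw [List.eraseIdx_eq_take_drop_succ, List.eraseIdx_eq_take_drop_succ,
      List.map_append, List.map_take, List.map_drop]
  · rw [List.eraseIdx_of_length_le h, List.eraseIdx_of_length_le (by simpa using h)]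

lemma delWord_singleton {q n : ℕ} (x : Fin n → Fin q) (j : Fin n) :
    delWord x {j} = (List.ofFn x).eraseIdx (j : ℕ) := by
  rw [delWord, sort_sdiff_singleton, List.ofFn_eq_map, map_eraseIdx']

lemma eraseIdx_indicator (n p j : ℕ) (hp : p < n) (hj : j < n) :
    (List.ofFn (fun i : Fin n => if (i : ℕ) = p then (1 : Fin 2) else 0)).eraseIdx j =
    if j = p then List.replicate (n - 1) (0 : Fin 2)
    else List.ofFn (fun i : Fin (n - 1) =>
      if (i : ℕ) = (if j < p then p - 1 else p) then (1 : Fin 2) else 0) := by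
  apply List.ext_getElem
  · simp [List.length_eraseIdx, hj]
    split <;> simp
  · intro i h1 h2
    have hi : i < n - 1 := by simpa [List.length_eraseIdx, hj] using h1
    rw [List.getElem_eraseIdx]
    split_ifs <;>
      try simp only [List.getElem_ofFn, List.getElem_replicate, Fin.val_mk, Fin.coe_cast]
    all_goals split_ifs <;>
      try simp only [List.getElem_ofFn, List.getElem_replicate, Fin.val_mk, Fin.coe_cast]
    all_goals try split_ifs
    all_goals first | rfl | omega

/-- In the multiset error-pattern model with single deletions (`t = 1`), the words
`x = 0^{⌈n/2⌉-1} 1 0^{⌊n/2⌋}` (single `1` at 0-indexed position `(n+1)/2 - 1`) and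
`x' = 0^{⌈n/2⌉} 1 0^{⌊n/2⌋-1}` (single `1` at position `(n+1)/2`) admit sets of
`⌊n/2⌋ + 1` distinct deletion vectors of weight exactly 1 with identical output multisets,
so `⌊n/2⌋ + 1` channels do not determine the transmitted word. -/
theorem multiset_model_single_deletion_not_enough_channels
    (n : ℕ) (hn : 4 ≤ n) :
    ∃ D D' : Finset (Finset (Fin n)),
      (∀ S ∈ D, S.card = 1) ∧ (∀ S ∈ D', S.card = 1) ∧
      D.card = n / 2 + 1 ∧ D'.card = n / 2 + 1 ∧
      Multiset.map (delWord (fun i : Fin n => if (i : ℕ) = (n + 1) / 2 - 1 then (1 : Fin 2) else 0))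
          D.val =
        Multiset.map (delWord (fun i : Fin n => if (i : ℕ) = (n + 1) / 2 then (1 : Fin 2) else 0))
          D'.val := by
  set a : ℕ := (n + 1) / 2 - 1 with ha
  have ha1 : (n + 1) / 2 = a + 1 := by omega
  set b : ℕ := n / 2 with hb
  have han : a < n := by omega
  have ha1n : a + 1 < n := by omega
  have hbn : b < n := by omega
  have hba : b ≤ a + 1 := by omega
  let fa : Fin n := ⟨a, han⟩
  let fa1 : Fin n := ⟨a + 1, ha1n⟩
  let fb : Fin n := ⟨b, hbn⟩
  let e : Fin n ↪ Finset (Fin n) := ⟨fun j => {j}, fun _ _ h => Finset.singleton_injective h⟩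
  refine ⟨(Finset.Ici fa).map e, (insert fa1 (Finset.Iio fb)).map e, ?_, ?_, ?_, ?_, ?_⟩
  · intro S hS
    obtain ⟨j, _, rfl⟩ := Finset.mem_map.1 hS
    exact Finset.card_singleton j
  · intro S hS
    obtain ⟨j, _, rfl⟩ := Finset.mem_map.1 hS
    exact Finset.card_singleton j
  · rw [Finset.card_map, Fin.card_Ici]
    simp only [fa, Fin.val_mk]
    omega
  · rw [Finset.card_map, Finset.card_insert_of_notMem (by
      simp only [Finset.mem_Iio, Fin.lt_def]
      exact Nat.not_lt.2 (show b ≤ a + 1 from hba)), Fin.card_Iio]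
  · have hIci : (Finset.Ici fa) = insert fa (Finset.Ioi fa) := (Finset.Ioi_insert fa).symm
    rw [Finset.map_val, Finset.map_val, Multiset.map_map, Multiset.map_map, hIci,
      Finset.insert_val_of_notMem (by simp), Finset.insert_val_of_notMem (by
        simp only [Finset.mem_Iio, Fin.lt_def]
        exact Nat.not_lt.2 (show b ≤ a + 1 from hba)),
      Multiset.map_cons, Multiset.map_cons]
    simp only [Function.comp_apply]
    have hza : delWord (fun i : Fin n => if (i : ℕ) = a then (1 : Fin 2) else 0)
        (e fa) = List.replicate (n - 1) 0 := by
      show delWord _ {fa} = _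
      rw [delWord_singleton, eraseIdx_indicator n _ _ (by omega) (by omega), if_pos rfl]
    have hza1 : delWord (fun i : Fin n => if (i : ℕ) = (n + 1) / 2 then (1 : Fin 2) else 0)
        (e fa1) = List.replicate (n - 1) 0 := by
      show delWord _ {fa1} = _
      rw [delWord_singleton, eraseIdx_indicator n _ _ (by omega) (by omega), if_pos (by
        exact ha1.symm)]
    rw [hza, hza1]
    congr 1
    have h1 : ∀ j ∈ (Finset.Ioi fa).val,
        delWord (fun i : Fin n => if (i : ℕ) = a then (1 : Fin 2) else 0) (e j)
        = List.ofFn (fun i : Fin (n - 1) => if (i : ℕ) = a then (1 : Fin 2) else 0) := by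
      intro j hj
      rw [Finset.mem_val, Finset.mem_Ioi, Fin.lt_def] at hj
      replace hj : a < (j : ℕ) := hj
      show delWord _ {j} = _
      rw [delWord_singleton, eraseIdx_indicator n _ _ (by omega) (by omega),
        if_neg (by omega), if_neg (by omega)]
    have h2 : ∀ j ∈ (Finset.Iio fb).val,
        delWord (fun i : Fin n => if (i : ℕ) = (n + 1) / 2 then (1 : Fin 2) else 0) (e j)
        = List.ofFn (fun i : Fin (n - 1) => if (i : ℕ) = a then (1 : Fin 2) else 0) := by
      intro j hj
      rw [Finset.mem_val, Finset.mem_Iio, Fin.lt_def] at hj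
      replace hj : (j : ℕ) < b := hj
      show delWord _ {j} = _
      rw [delWord_singleton, eraseIdx_indicator n _ _ (by omega) (by omega),
        if_neg (by omega), if_pos (by omega)]
    rw [Multiset.map_congr rfl h1, Multiset.map_congr rfl h2,
      Multiset.map_const', Multiset.map_const']
    congr 1
    rw [← Finset.card_def, ← Finset.card_def, Fin.card_Ioi, Fin.card_Iio]
    simp only [fa, fb, Fin.val_mk]
    omega
end

section
/- Let t ≥ 1, n ≥ t+1 and 1 ≤ a ≤ n−1 be integers, and consider the binary words x = 0^{a−1} 1 0^{n−a} and x' = 0^{a} 1 0^{n−a−1} of length n. Let K = ⌊(a·t + a)/n⌋ and M = C(n,t) − C(a−1, K)·C(n−a−1, t−K). Then: (1) there exist sets D and D' of deletion vectors for length-n words, each vector of weight exactly t, with |D| = |D'| = M, such that the output multiset of D on x equals the output multiset of D' on x'; and (2) for any sets D and D' of deletion vectors of weight exactly t with |D| = |D'| whose output multiset on x equals the output multiset on x', one has |D| ≤ M. In other words, M + 1 channels with distinct deletion vectors of weight exactly t suffice to distinguish x from x' in the multiset model, while M channels do not. -/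
open Finset

lemma map_ind_sorted {n : ℕ} (p : Fin n) :
    ∀ (l : List (Fin n)), l.Pairwise (· < ·) →
      l.map (fun i => if i = p then (1 : Fin 2) else 0) =
        if p ∈ l then
          List.replicate (l.countP (fun i => decide (i < p))) 0 ++ 1 ::
            List.replicate (l.length - l.countP (fun i => decide (i < p)) - 1) 0
        else List.replicate l.length 0 := by
  intro l
  induction l with
  | nil => simp
  | cons h tl ih =>
    intro hs
    rw [List.pairwise_cons] at hs
    obtain ⟨hlt, hstl⟩ := hs
    have ihtl := ih hstl
    have hcnt : List.countP (fun i => decide (i < p)) (h :: tl)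
        = (if h < p then 1 else 0) + List.countP (fun i => decide (i < p)) tl := by
      rw [List.countP_cons]
      by_cases hhp : h < p <;> simp [hhp, Nat.add_comm]
    rcases lt_trichotomy h p with hc | hc | hc
    · have hne : h ≠ p := ne_of_lt hc
      have hmem : (p ∈ h :: tl) ↔ (p ∈ tl) := by
        simp [List.mem_cons, hne.symm]
      by_cases hp : p ∈ tl
      · rw [if_pos (hmem.mpr hp)]
        rw [List.map_cons, if_neg hne, ihtl, if_pos hp, hcnt, if_pos hc]
        have hle : List.countP (fun i => decide (i < p)) tl ≤ tl.length :=
          List.countP_le_length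
        simp only [List.length_cons]
        rw [show 1 + List.countP (fun i => decide (i < p)) tl
            = List.countP (fun i => decide (i < p)) tl + 1 by omega]
        rw [List.replicate_succ' ]
        simp only [List.append_assoc, List.cons_append, List.nil_append,
          List.replicate_succ]
        rw [show tl.length + 1 - (List.countP (fun i => decide (i < p)) tl + 1) - 1
            = tl.length - List.countP (fun i => decide (i < p)) tl - 1 by omega]
        rw [← List.cons_append, ← List.replicate_succ, List.replicate_succ', List.append_assoc]; rfl
      · rw [if_neg (by rw [hmem]; exact hp)]
        rw [List.map_cons, if_neg hne, ihtl, if_neg hp]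
        simp [List.replicate_succ]
    · -- h = p
      have hp : p ∉ tl := fun hmem => absurd (hlt p hmem) (by simp [hc])
      have hc0 : List.countP (fun i => decide (i < p)) tl = 0 := by
        rw [List.countP_eq_zero]
        intro i hi
        simp only [decide_eq_true_eq]
        exact not_lt.mpr (le_of_lt (hc ▸ hlt i hi))
      rw [if_pos (by simp [hc])]
      rw [List.map_cons, if_pos hc, ihtl, if_neg hp, hcnt, if_neg (by simp [hc]), hc0]
      simp [List.replicate_succ]
    · -- p < h : p not in list, everything not equal
      have hp : p ∉ tl := fun hmem => absurd (hlt p hmem) (not_lt.mpr (le_of_lt hc))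
      have hne : h ≠ p := (ne_of_lt hc).symm
      rw [if_neg (by simp [List.mem_cons, hne.symm, hp])]
      rw [List.map_cons, if_neg hne, ihtl, if_neg hp]
      simp [List.replicate_succ]


def Fenc (n t : ℕ) : Option ℕ → List (Fin 2)
  | none => List.replicate (n - t) 0
  | some k => List.replicate k 0 ++ 1 :: List.replicate (n - t - 1 - k) 0

def keyOf {n : ℕ} (p : Fin n) (S : Finset (Fin n)) : Option ℕ :=
  if p ∈ S then none else some (((univ \ S).filter (fun i => i < p)).card)

lemma countP_sort {α : Type*} [LinearOrder α] (s : Finset α) (q : α → Bool) :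
    (s.sort (· ≤ ·)).countP q = (s.filter (fun a => q a)).card := by
  rw [(Finset.sort_perm_toList s (· ≤ ·)).countP_eq]
  have h1 : Multiset.countP (fun a => q a = true) s.val = List.countP q s.val.toList := by
    conv_lhs => rw [← Multiset.coe_toList s.val]
    rw [Multiset.coe_countP]
    simp
  rw [Finset.toList, ← h1, Multiset.countP_eq_card_filter]
  rfl

lemma delWord_ind {n t : ℕ} (p : Fin n) (S : Finset (Fin n)) (hS : S.card = t) :
    delWord (fun i => if i = p then (1:Fin 2) else 0) S = Fenc n t (keyOf p S) := by
  have hsorted := (Finset.sortedLT_sort (univ \ S)).pairwise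
  have hmain := map_ind_sorted p ((univ \ S).sort (· ≤ ·)) hsorted
  have hlen : ((univ \ S).sort (· ≤ ·)).length = n - t := by
    rw [Finset.length_sort, Finset.card_sdiff_of_subset (subset_univ S), card_univ, Fintype.card_fin, hS]
  have hcnt : ((univ \ S).sort (· ≤ ·)).countP (fun i => decide (i < p))
      = ((univ \ S).filter (fun i => i < p)).card := by
    rw [countP_sort]; simp
  have hmem : p ∈ (univ \ S).sort (· ≤ ·) ↔ p ∉ S := by
    rw [Finset.mem_sort, Finset.mem_sdiff]; simp
  unfold delWord keyOf
  by_cases hp : p ∈ S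
  · rw [hmain, if_neg (fun h => (hmem.mp h) hp), if_pos hp, hlen]; rfl
  · rw [hmain, if_pos (hmem.mpr hp), if_neg hp, hcnt, hlen]; simp [Fenc]; omega

lemma takeWhile_rep (k : ℕ) (u : List (Fin 2)) :
    (List.replicate k (0:Fin 2) ++ 1 :: u).takeWhile (fun c => c == 0) = List.replicate k 0 := by
  induction k with
  | zero => simp [List.takeWhile]
  | succ m ih => simp [List.replicate_succ, List.takeWhile, ih]

lemma Fenc_inj (n t : ℕ) : Function.Injective (Fenc n t) := by
  intro o o' h
  have hone : ∀ m : ℕ, (1 : Fin 2) ∉ List.replicate m (0:Fin 2) := by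
    intro m hm
    rw [List.mem_replicate] at hm
    exact absurd hm.2 (by decide)
  match o, o' with
  | none, none => rfl
  | none, some k =>
      exfalso
      apply hone (n - t)
      rw [show List.replicate (n-t) (0:Fin 2) = Fenc n t none from rfl, h]
      simp [Fenc]
  | some k, none =>
      exfalso
      apply hone (n - t)
      rw [show List.replicate (n-t) (0:Fin 2) = Fenc n t none from rfl, ← h]
      simp [Fenc]
  | some k, some k' =>
      have := congrArg (fun l => (List.takeWhile (fun c => c == (0:Fin 2)) l).length) h
      simp only [Fenc, takeWhile_rep, List.length_replicate] at this
      exact congrArg some this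

lemma split_card {n : ℕ} (p : Fin n) (S : Finset (Fin n)) (hp : p ∉ S) :
    (S.filter (fun i => i < p)).card + (S.filter (fun i => p < i)).card = S.card := by
  have h := Finset.card_filter_add_card_filter_not (s := S) (fun i => i < p)
  have he : S.filter (fun i => ¬ i < p) = S.filter (fun i => p < i) := by
    apply Finset.filter_congr
    intro i hi
    simp only [not_lt, eq_iff_iff]
    constructor
    · intro hle; exact lt_of_le_of_ne hle (fun hh => hp (hh ▸ hi))
    · exact le_of_lt
  rw [he] at h
  exact h

lemma count_fiber_some {n t : ℕ} (p : Fin n) (j : ℕ) (hj : j ≤ t) :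
    ((Finset.univ.powersetCard t).filter
      (fun S : Finset (Fin n) => p ∉ S ∧ (S.filter (fun i => i < p)).card = j)).card
    = (p : ℕ).choose j * (n - 1 - (p : ℕ)).choose (t - j) := by
  rw [← Fin.card_Ioi p, ← Fin.card_Iio p, ← Finset.card_powersetCard, ← Finset.card_powersetCard,
    ← Finset.card_product]
  apply Finset.card_nbij' (fun S => (S.filter (fun i => i < p), S.filter (fun i => p < i)))
    (fun LR => LR.1 ∪ LR.2)
  · intro S hS
    simp only [Finset.mem_coe, Finset.mem_filter, Finset.mem_powersetCard] at hS
    obtain ⟨⟨_, hcard⟩, hp, hfj⟩ := hS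
    simp only [Finset.mem_coe, Finset.mem_product, Finset.mem_powersetCard]
    refine ⟨⟨?_, hfj⟩, ?_, ?_⟩
    · intro i hi; simp only [Finset.mem_filter] at hi; exact Finset.mem_Iio.mpr hi.2
    · intro i hi; simp only [Finset.mem_filter] at hi; exact Finset.mem_Ioi.mpr hi.2
    · have := split_card p S hp
      omega
  · intro LR hLR
    simp only [Finset.mem_coe, Finset.mem_product, Finset.mem_powersetCard] at hLR
    obtain ⟨⟨hL, hLc⟩, hR, hRc⟩ := hLR
    have hdisj : Disjoint LR.1 LR.2 := by
      apply Finset.disjoint_left.mpr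
      intro i hiL hiR
      have h1 := Finset.mem_Iio.mp (hL hiL)
      have h2 := Finset.mem_Ioi.mp (hR hiR)
      exact absurd (h1.trans h2) (lt_irrefl i)
    simp only [Finset.mem_coe, Finset.mem_filter, Finset.mem_powersetCard]
    refine ⟨⟨Finset.subset_univ _, ?_⟩, ?_, ?_⟩
    · rw [Finset.card_union_of_disjoint hdisj, hLc, hRc]; omega
    · intro hmem
      rcases Finset.mem_union.mp hmem with h | h
      · exact absurd (Finset.mem_Iio.mp (hL h)) (lt_irrefl p)
      · exact absurd (Finset.mem_Ioi.mp (hR h)) (lt_irrefl p)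
    · rw [Finset.filter_union]
      have e1 : LR.1.filter (fun i => i < p) = LR.1 :=
        Finset.filter_true_of_mem (fun i hi => Finset.mem_Iio.mp (hL hi))
      have e2 : LR.2.filter (fun i => i < p) = ∅ := by
        apply Finset.filter_false_of_mem
        intro i hi
        exact not_lt.mpr (le_of_lt (Finset.mem_Ioi.mp (hR hi)))
      rw [e1, e2, Finset.union_empty, hLc]
  · intro S hS
    simp only [Finset.mem_coe, Finset.mem_filter, Finset.mem_powersetCard] at hS
    obtain ⟨⟨_, hcard⟩, hp, hfj⟩ := hS
    ext i
    simp only [Finset.mem_union, Finset.mem_filter]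
    constructor
    · rintro (⟨hi, _⟩ | ⟨hi, _⟩) <;> exact hi
    · intro hi
      rcases lt_trichotomy i p with h | h | h
      · exact Or.inl ⟨hi, h⟩
      · exact absurd (h ▸ hi) hp
      · exact Or.inr ⟨hi, h⟩
  · intro LR hLR
    simp only [Finset.mem_coe, Finset.mem_product, Finset.mem_powersetCard] at hLR
    obtain ⟨⟨hL, _⟩, hR, _⟩ := hLR
    have e1 : LR.1.filter (fun i => i < p) = LR.1 :=
      Finset.filter_true_of_mem (fun i hi => Finset.mem_Iio.mp (hL hi))
    have e2 : LR.2.filter (fun i => i < p) = ∅ :=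
      Finset.filter_false_of_mem (fun i hi => not_lt.mpr (le_of_lt (Finset.mem_Ioi.mp (hR hi))))
    have e3 : LR.2.filter (fun i => p < i) = LR.2 :=
      Finset.filter_true_of_mem (fun i hi => Finset.mem_Ioi.mp (hR hi))
    have e4 : LR.1.filter (fun i => p < i) = ∅ :=
      Finset.filter_false_of_mem (fun i hi => not_lt.mpr (le_of_lt (Finset.mem_Iio.mp (hL hi))))
    dsimp only
    rw [Finset.filter_union, Finset.filter_union, e1, e2, e3, e4,
      Finset.union_empty, Finset.empty_union]

lemma count_fiber_none {n t : ℕ} (p : Fin n) (ht : 1 ≤ t) :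
    ((Finset.univ.powersetCard t).filter
      (fun S : Finset (Fin n) => p ∈ S)).card = (n - 1).choose (t - 1) := by
  have hcard : ((Finset.univ : Finset (Fin n)).erase p).card = n - 1 := by
    rw [Finset.card_erase_of_mem (Finset.mem_univ p), Finset.card_univ, Fintype.card_fin]
  rw [← hcard, ← Finset.card_powersetCard]
  apply Finset.card_nbij' (fun S => S.erase p) (fun T => insert p T)
  · intro S hS
    simp only [Finset.mem_coe, Finset.mem_filter, Finset.mem_powersetCard] at hS
    obtain ⟨⟨_, hcard⟩, hp⟩ := hS
    simp only [Finset.mem_coe, Finset.mem_powersetCard]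
    constructor
    · intro i hi
      simp only [Finset.mem_erase] at hi ⊢
      exact ⟨hi.1, Finset.mem_univ i⟩
    · rw [Finset.card_erase_of_mem hp, hcard]
  · intro T hT
    simp only [Finset.mem_coe, Finset.mem_powersetCard] at hT
    obtain ⟨hsub, hc⟩ := hT
    have hpT : p ∉ T := fun h => by simpa using (hsub h)
    simp only [Finset.mem_coe, Finset.mem_filter, Finset.mem_powersetCard]
    exact ⟨⟨Finset.subset_univ _, by rw [Finset.card_insert_of_notMem hpT, hc]; omega⟩,
      Finset.mem_insert_self p T⟩
  · intro S hS
    simp only [Finset.mem_coe, Finset.mem_filter] at hS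
    exact Finset.insert_erase hS.2
  · intro T hT
    simp only [Finset.mem_coe, Finset.mem_powersetCard] at hT
    have hpT : p ∉ T := fun h => by simpa using (hT.1 h)
    exact Finset.erase_insert hpT

lemma count_fiber_some_big {n t : ℕ} (p : Fin n) (j : ℕ) (hj : t < j) :
    ((Finset.univ.powersetCard t).filter
      (fun S : Finset (Fin n) => p ∉ S ∧ (S.filter (fun i => i < p)).card = j)).card = 0 := by
  rw [Finset.card_eq_zero, Finset.filter_eq_empty_iff]
  rintro S hS ⟨hp, hfj⟩
  simp only [Finset.mem_powersetCard] at hS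
  have : (S.filter (fun i => i < p)).card ≤ S.card := Finset.card_filter_le _ _
  omega

/-- the central hypergeometric-type sequence -/
def gseq (A B t : ℕ) (j : ℕ) : ℕ := if j ≤ t then A.choose j * B.choose (t - j) else 0

lemma gseq_cross (A B t j : ℕ) (hj : j < t) :
    gseq A B t (j+1) * ((j+1) * (B - (t - j - 1))) = gseq A B t j * ((A - j) * (t - j)) := by
  unfold gseq
  rw [if_pos (by omega), if_pos (by omega)]
  have h1 : A.choose (j+1) * (j+1) = A.choose j * (A - j) := Nat.choose_succ_right_eq A j
  have h2 : B.choose (t - j) * (t - j) = B.choose (t - j - 1) * (B - (t - j - 1)) := by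
    have e : t - j = (t - j - 1) + 1 := by omega
    rw [e, Nat.add_sub_cancel]
    exact Nat.choose_succ_right_eq B (t - j - 1)
  calc A.choose (j+1) * B.choose (t-j-1) * ((j+1) * (B - (t - j - 1)))
      = (A.choose (j+1) * (j+1)) * (B.choose (t-j-1) * (B - (t - j - 1))) := by ring
    _ = (A.choose j * (A - j)) * (B.choose (t - j) * (t - j)) := by rw [h1, ← h2]
    _ = A.choose j * B.choose (t - j) * ((A - j) * (t - j)) := by ring

lemma ineq_up (j u v w : ℕ) (h : (j+u+v+w+4)*(j+1) ≤ (j+u+2)*(j+v+2)) :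
    (j+1)*(w+1) ≤ (u+1)*(v+1) := by nlinarith

lemma ineq_down (j u v w : ℕ) (h : (j+u+2)*(j+v+2) < (j+u+v+w+4)*(j+1)) :
    (u+1)*(v+1) ≤ (j+1)*(w+1) := by nlinarith

lemma gseq_mono_up (A B t j : ℕ) (hjt : j < t) (hjA : j < A)
    (h : (A+B+2)*(j+1) ≤ (A+1)*(t+1)) : gseq A B t j ≤ gseq A B t (j+1) := by
  by_cases hB : B < t - j
  · have hz : B.choose (t - j) = 0 := Nat.choose_eq_zero_of_lt hB
    unfold gseq
    rw [if_pos (by omega), hz, Nat.mul_zero]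
    exact Nat.zero_le _
  · push_neg at hB
    have hcross := gseq_cross A B t j hjt
    have hwpos : t - j - 1 < B := by omega
    obtain ⟨u, hu⟩ : ∃ u, A = j + u + 1 := ⟨A - j - 1, by omega⟩
    obtain ⟨v, hv⟩ : ∃ v, t = j + v + 1 := ⟨t - j - 1, by omega⟩
    obtain ⟨w, hw2⟩ : ∃ w, B = v + w + 1 := ⟨B - v - 1, by omega⟩
    have r1 : B - (t - j - 1) = w + 1 := by omega
    have r2 : A - j = u + 1 := by omega
    have r3 : t - j = v + 1 := by omega
    have hXY : (j+1) * (B - (t - j - 1)) ≤ (A - j) * (t - j) := by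
      rw [r1, r2, r3]
      apply ineq_up j u v w
      have e1 : A + B + 2 = j+u+v+w+4 := by omega
      have e2 : A + 1 = j+u+2 := by omega
      have e3 : t + 1 = j+v+2 := by omega
      rw [e1, e2, e3] at h
      exact h
    have hXpos : 0 < (j+1) * (B - (t - j - 1)) := by rw [r1]; positivity
    apply Nat.le_of_mul_le_mul_right _ hXpos
    calc gseq A B t j * ((j+1) * (B - (t - j - 1)))
        ≤ gseq A B t j * ((A - j) * (t - j)) := Nat.mul_le_mul_left _ hXY
      _ = gseq A B t (j+1) * ((j+1) * (B - (t - j - 1))) := hcross.symm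

lemma gseq_mono_down (A B t j : ℕ)
    (h : (A+1)*(t+1) < (A+B+2)*(j+1)) : gseq A B t (j+1) ≤ gseq A B t j := by
  by_cases hjt : j < t
  · by_cases hjA : j < A
    · by_cases hB : B < t - j - 1
      · have hz : B.choose (t - j - 1) = 0 := Nat.choose_eq_zero_of_lt hB
        unfold gseq
        rw [if_pos (by omega)]
        have e : t - (j+1) = t - j - 1 := by omega
        rw [e, hz, Nat.mul_zero]
        exact Nat.zero_le _
      · push_neg at hB
        have hcross := gseq_cross A B t j hjt
        by_cases hw0 : B = t - j - 1
        · -- X = 0 : then g j * Y = 0 and Y > 0 so g j = 0; but also g (j+1) ≤ ...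
          -- show this case contradicts h? No: show g (j+1) = 0
          -- g(j+1) = C(A,j+1) * C(B, t-j-1) = C(A,j+1)*C(B,B); not nec 0.
          -- From hcross : g(j+1) * 0 = g j * Y. Use direct argument:
          -- claimed earlier this case is impossible given h, strictness, j<A, j<t.
          exfalso
          obtain ⟨u, hu⟩ : ∃ u, A = j + u + 1 := ⟨A - j - 1, by omega⟩
          obtain ⟨v, hv⟩ : ∃ v, t = j + v + 1 := ⟨t - j - 1, by omega⟩
          have hBv : B = v := by omega
          -- h : (A+1)(t+1) < (A+B+2)(j+1)
          have e1 : A + B + 2 = j+u+v+3 := by omega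
          have e2 : A + 1 = j+u+2 := by omega
          have e3 : t + 1 = j+v+2 := by omega
          rw [e1, e2, e3] at h
          nlinarith
        · have hwpos : t - j - 1 < B := by omega
          obtain ⟨u, hu⟩ : ∃ u, A = j + u + 1 := ⟨A - j - 1, by omega⟩
          obtain ⟨v, hv⟩ : ∃ v, t = j + v + 1 := ⟨t - j - 1, by omega⟩
          obtain ⟨w, hw2⟩ : ∃ w, B = v + w + 1 := ⟨B - v - 1, by omega⟩
          have r1 : B - (t - j - 1) = w + 1 := by omega
          have r2 : A - j = u + 1 := by omega
          have r3 : t - j = v + 1 := by omega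
          have hYX : (A - j) * (t - j) ≤ (j+1) * (B - (t - j - 1)) := by
            rw [r1, r2, r3]
            apply ineq_down j u v w
            have e1 : A + B + 2 = j+u+v+w+4 := by omega
            have e2 : A + 1 = j+u+2 := by omega
            have e3 : t + 1 = j+v+2 := by omega
            rw [e1, e2, e3] at h
            exact h
          have hXpos : 0 < (j+1) * (B - (t - j - 1)) := by rw [r1]; positivity
          apply Nat.le_of_mul_le_mul_right _ hXpos
          calc gseq A B t (j+1) * ((j+1) * (B - (t - j - 1)))
              = gseq A B t j * ((A - j) * (t - j)) := hcross
            _ ≤ gseq A B t j * ((j+1) * (B - (t - j - 1))) :=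
                Nat.mul_le_mul_left _ hYX
    · unfold gseq
      rw [if_pos (by omega)]
      have hz : A.choose (j+1) = 0 := Nat.choose_eq_zero_of_lt (by omega)
      rw [hz, Nat.zero_mul]
      exact Nat.zero_le _
  · unfold gseq
    rw [if_neg (by omega)]
    exact Nat.zero_le _

lemma sum_sub_antitone (g : ℕ → ℕ) (K : ℕ)
    (hdown : ∀ j, K ≤ j → g (j+1) ≤ g j) :
    ∀ m, K ≤ m → (∑ j ∈ Finset.Ico K m, (g j - g (j+1))) = g K - g m := by
  have hchain : ∀ m, K ≤ m → g m ≤ g K := by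
    intro m
    induction m with
    | zero =>
      intro h
      have : K = 0 := by omega
      rw [this]
    | succ m ih =>
      intro h
      rcases Nat.lt_or_ge K (m+1) with h' | h'
      · have hKm : K ≤ m := by omega
        exact le_trans (hdown m hKm) (ih hKm)
      · have : K = m + 1 := by omega
        rw [this]
  intro m
  induction m with
  | zero =>
    intro h
    have : K = 0 := by omega
    subst this
    simp
  | succ m ih =>
    intro h
    rcases Nat.lt_or_ge K (m+1) with h' | h'
    · have hKm : K ≤ m := by omega
      rw [Finset.sum_Ico_succ_top hKm, ih hKm]
      have h1 := hdown m hKm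
      have h2 := hchain m hKm
      omega
    · have : K = m + 1 := by omega
      subst this
      simp

lemma telescope_sum (g : ℕ → ℕ) (K A : ℕ) (hKA : K ≤ A + 1)
    (hup : ∀ j, j + 1 ≤ K → g j ≤ g (j+1))
    (hdown : ∀ j, K ≤ j → g (j+1) ≤ g j)
    (hend : g (A+1) = 0) :
    (∑ j ∈ Finset.range (A+1), (g j - g (j+1))) = g K := by
  rw [Finset.range_eq_Ico, ← Finset.sum_Ico_consecutive _ (Nat.zero_le K) hKA]
  have h1 : (∑ j ∈ Finset.Ico 0 K, (g j - g (j+1))) = 0 := by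
    apply Finset.sum_eq_zero
    intro j hj
    simp only [Finset.mem_Ico] at hj
    have := hup j (by omega)
    omega
  rw [h1, Nat.zero_add, sum_sub_antitone g K hdown (A+1) hKA, hend]
  omega

def Pseq (A B t j : ℕ) : ℕ := if j ≤ t then A.choose j * (B+1).choose (t-j) else 0
def Qseq (A B t j : ℕ) : ℕ := if j + 1 ≤ t then (A+1).choose (j+1) * B.choose (t-j-1) else 0

lemma P_sub_Q (A B t j : ℕ) :
    Pseq A B t j - Qseq A B t j = gseq A B t j - gseq A B t (j+1) := by
  unfold Pseq Qseq gseq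
  by_cases h1 : j + 1 ≤ t
  · rw [if_pos h1, if_pos (by omega), if_pos (by omega), if_pos h1]
    have e1 : t - j = (t - j - 1) + 1 := by omega
    have e2 : t - (j + 1) = t - j - 1 := by omega
    rw [e2]
    have hp1 : (B+1).choose (t - j) = B.choose (t-j-1) + B.choose (t-j) := by
      have e5 : t - j = (t - j - 1).succ := by omega
      conv_lhs => rw [e5]
      rw [Nat.choose_succ_succ]
      have e6 : (t-j-1).succ = t - j := by omega
      rw [e6]
    have hp2 : (A+1).choose (j+1) = A.choose j + A.choose (j+1) := Nat.choose_succ_succ A j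
    rw [hp1, hp2]
    have e3 : A.choose j * (B.choose (t-j-1) + B.choose (t-j))
        = A.choose j * B.choose (t-j-1) + A.choose j * B.choose (t-j) := by ring
    have e4 : (A.choose j + A.choose (j+1)) * B.choose (t-j-1)
        = A.choose j * B.choose (t-j-1) + A.choose (j+1) * B.choose (t-j-1) := by ring
    rw [e3, e4]
    omega
  · by_cases h2 : j ≤ t
    · have hjt : j = t := by omega
      subst hjt
      rw [if_pos (le_refl j), if_neg h1, if_pos (le_refl j), if_neg (by omega)]
      simp
    · rw [if_neg h2, if_neg h1, if_neg h2]
      simp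

lemma sum_P (A B t : ℕ) :
    ∑ j ∈ Finset.range (A+1), Pseq A B t j = (A+B+1).choose t := by
  have h1 : (A+B+1).choose t = ∑ j ∈ Finset.range (t+1), A.choose j * (B+1).choose (t-j) := by
    have e : A+B+1 = A + (B+1) := by omega
    rw [e, Nat.add_choose_eq, Finset.Nat.sum_antidiagonal_eq_sum_range_succ_mk]
  have h2 : ∑ j ∈ Finset.range (t+1), A.choose j * (B+1).choose (t-j)
      = ∑ j ∈ Finset.range (t+1), Pseq A B t j := by
    apply Finset.sum_congr rfl
    intro j hj
    rw [Finset.mem_range] at hj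
    unfold Pseq
    rw [if_pos (by omega)]
  set m := max A t + 1 with hm
  have e1 : ∑ j ∈ Finset.range (A+1), Pseq A B t j = ∑ j ∈ Finset.range m, Pseq A B t j := by
    apply Finset.sum_subset (Finset.range_subset_range.mpr (by omega))
    intro j _ hj
    rw [Finset.mem_range] at hj
    unfold Pseq
    by_cases hjt : j ≤ t
    · rw [if_pos hjt, Nat.choose_eq_zero_of_lt (by omega), Nat.zero_mul]
    · rw [if_neg hjt]
  have e2 : ∑ j ∈ Finset.range (t+1), Pseq A B t j = ∑ j ∈ Finset.range m, Pseq A B t j := by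
    apply Finset.sum_subset (Finset.range_subset_range.mpr (by omega))
    intro j _ hj
    rw [Finset.mem_range] at hj
    unfold Pseq
    rw [if_neg (by omega)]
  rw [e1, h1, h2, e2]

lemma min_sum_eq (A B t : ℕ) (ht : 1 ≤ t) (htn : t + 1 ≤ A+B+2) :
    (A+B+1).choose (t-1) + ∑ j ∈ Finset.range (A+1), min (Pseq A B t j) (Qseq A B t j)
      = (A+B+2).choose t - A.choose ((A+1)*(t+1)/(A+B+2)) *
          B.choose (t - (A+1)*(t+1)/(A+B+2)) := by
  obtain ⟨K, hK⟩ : ∃ K, (A+1)*(t+1)/(A+B+2) = K := ⟨_, rfl⟩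
  rw [hK]
  have hnpos : 0 < A+B+2 := by omega
  have hdm := Nat.div_add_mod ((A+1)*(t+1)) (A+B+2)
  have hmod := Nat.mod_lt ((A+1)*(t+1)) hnpos
  rw [hK] at hdm
  have hlow : (A+B+2) * K ≤ (A+1)*(t+1) := by omega
  have hmul1 : (A+B+2) * (K+1) = (A+B+2) * K + (A+B+2) := by ring
  have hhigh : (A+1)*(t+1) < (A+B+2) * (K+1) := by omega
  have hKt : K ≤ t := by
    have h1 : (A+1)*(t+1) < (A+B+2)*(t+1) :=
      Nat.mul_lt_mul_of_lt_of_le (by omega) (le_refl _) (by omega)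
    have h2 : (A+B+2) * K < (A+B+2) * (t+1) := by omega
    exact Nat.lt_succ_iff.mp (Nat.lt_of_mul_lt_mul_left h2)
  have hKA : K ≤ A + 1 := by
    have h1 : (A+1)*(t+1) ≤ (A+1)*(A+B+2) := Nat.mul_le_mul_left _ (by omega)
    have h2 : (A+B+2) * K ≤ (A+B+2) * (A+1) := by
      have e : (A+1)*(A+B+2) = (A+B+2)*(A+1) := by ring
      omega
    exact Nat.le_of_mul_le_mul_left h2 hnpos
  have hup : ∀ j, j + 1 ≤ K → gseq A B t j ≤ gseq A B t (j+1) := by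
    intro j hj
    by_cases hjA : j < A
    · apply gseq_mono_up A B t j (by omega) hjA
      calc (A+B+2)*(j+1) ≤ (A+B+2) * K := Nat.mul_le_mul_left _ hj
        _ ≤ (A+1)*(t+1) := hlow
    · have hjA' : j = A := by omega
      rw [hjA'] at hj ⊢
      have hKA1 : K = A + 1 := by omega
      have h2 : (A+B+2) * (A+1) ≤ (A+1)*(t+1) := by
        rw [hKA1] at hlow; exact hlow
      have h3 : (A+B+2) * (A+1) ≤ (t+1) * (A+1) := by
        have e : (A+1)*(t+1) = (t+1)*(A+1) := by ring
        omega
      have hnt : A+B+2 ≤ t + 1 := Nat.le_of_mul_le_mul_right h3 (by omega)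
      have hnt' : A+B+2 = t + 1 := by omega
      have hBA : B < t - A := by omega
      unfold gseq
      rw [if_pos (by omega), Nat.choose_eq_zero_of_lt hBA, Nat.mul_zero]
      exact Nat.zero_le _
  have hdown : ∀ j, K ≤ j → gseq A B t (j+1) ≤ gseq A B t j := by
    intro j hj
    apply gseq_mono_down
    calc (A+1)*(t+1) < (A+B+2) * (K+1) := hhigh
      _ ≤ (A+B+2) * (j+1) := Nat.mul_le_mul_left _ (by omega)
  have hend : gseq A B t (A+1) = 0 := by
    unfold gseq
    by_cases h : A + 1 ≤ t
    · rw [if_pos h, Nat.choose_eq_zero_of_lt (by omega), Nat.zero_mul]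
    · rw [if_neg h]
  have htel := telescope_sum (gseq A B t) K A hKA hup hdown hend
  have hmin : ∀ j ∈ Finset.range (A+1), min (Pseq A B t j) (Qseq A B t j)
      = Pseq A B t j - (gseq A B t j - gseq A B t (j+1)) := by
    intro j _
    rw [← P_sub_Q]
    omega
  rw [Finset.sum_congr rfl hmin]
  have hle : ∀ j ∈ Finset.range (A+1),
      gseq A B t j - gseq A B t (j+1) ≤ Pseq A B t j := by
    intro j _
    rw [← P_sub_Q]
    omega
  rw [Finset.sum_tsub_distrib _ hle, htel, sum_P]
  have hgK : gseq A B t K = A.choose K * B.choose (t - K) := by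
    unfold gseq
    rw [if_pos hKt]
  rw [← hgK]
  have hgle : gseq A B t K ≤ (A+B+1).choose t := by
    rw [← sum_P A B t, ← htel]
    apply Finset.sum_le_sum
    intro j hj
    rw [← P_sub_Q]
    omega
  have hpascal : (A+B+2).choose t = (A+B+1).choose (t-1) + (A+B+1).choose t := by
    obtain ⟨s, rfl⟩ : ∃ s, t = s + 1 := ⟨t-1, by omega⟩
    have e : s + 1 - 1 = s := by omega
    rw [e]
    have h := Nat.choose_succ_succ (A+B+1) s
    have e2 : (A+B+1).succ = A+B+2 := by omega
    rw [e2] at h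
    exact h
  omega


def fib {n : ℕ} (t : ℕ) (p : Fin n) (o : Option ℕ) : Finset (Finset (Fin n)) :=
  (Finset.univ.powersetCard t).filter (fun S => keyOf p S = o)

lemma keyOf_none_iff {n : ℕ} (p : Fin n) (S : Finset (Fin n)) :
    keyOf p S = none ↔ p ∈ S := by
  unfold keyOf
  by_cases hp : p ∈ S <;> simp [hp]

lemma keyOf_some_iff {n : ℕ} (p : Fin n) (S : Finset (Fin n)) (k : ℕ) :
    keyOf p S = some k ↔ p ∉ S ∧ ((univ \ S).filter (fun i => i < p)).card = k := by
  unfold keyOf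
  by_cases hp : p ∈ S <;> simp [hp]

lemma compl_filter_card {n : ℕ} (p : Fin n) (S : Finset (Fin n)) :
    ((univ \ S).filter (fun i => i < p)).card + (S.filter (fun i => i < p)).card = (p : ℕ) := by
  have he : (univ \ S).filter (fun i => i < p)
      = (univ.filter (fun i => i < p)) \ (S.filter (fun i => i < p)) := by
    ext i
    simp only [mem_filter, mem_sdiff, mem_univ, true_and]
    tauto
  have hsub : S.filter (fun i => i < p) ⊆ univ.filter (fun i => i < p) :=
    Finset.filter_subset_filter _ (subset_univ S)
  have hIio : univ.filter (fun i => i < p) = Finset.Iio p := by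
    ext i
    simp [Finset.mem_Iio]
  have hcard := Finset.card_sdiff_of_subset hsub
  have hle := Finset.card_le_card hsub
  rw [he, hcard, hIio, Fin.card_Iio]
  rw [hIio, Fin.card_Iio] at hle
  omega

lemma filter_le_card {n : ℕ} (p : Fin n) (S : Finset (Fin n)) :
    ((univ \ S).filter (fun i => i < p)).card ≤ (p : ℕ) := by
  have := compl_filter_card p S
  omega

/-- fiber of `none` -/
lemma fib_none {n t : ℕ} (p : Fin n) (ht : 1 ≤ t) :
    (fib t p none).card = (n-1).choose (t-1) := by
  unfold fib
  rw [show (Finset.filter (fun S => keyOf p S = none) (Finset.univ.powersetCard t))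
      = (Finset.filter (fun S : Finset (Fin n) => p ∈ S) (Finset.univ.powersetCard t)) from
    Finset.filter_congr (fun S _ => by rw [keyOf_none_iff])]
  exact count_fiber_none p ht

/-- fiber of `some k` when `k ≤ p` and `p - k ≤ t` -/
lemma fib_some {n t : ℕ} (p : Fin n) (k : ℕ) (hk : k ≤ (p:ℕ)) (hj : (p:ℕ) - k ≤ t) :
    (fib t p (some k)).card = (p:ℕ).choose ((p:ℕ) - k) * (n - 1 - (p:ℕ)).choose (t - ((p:ℕ) - k)) := by
  unfold fib
  rw [show (Finset.filter (fun S => keyOf p S = some k) (Finset.univ.powersetCard t))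
      = (Finset.filter (fun S : Finset (Fin n) =>
          p ∉ S ∧ (S.filter (fun i => i < p)).card = (p:ℕ) - k) (Finset.univ.powersetCard t)) from
    Finset.filter_congr (fun S _ => by
      rw [keyOf_some_iff]
      have h := compl_filter_card p S
      constructor
      · rintro ⟨h1, h2⟩; exact ⟨h1, by omega⟩
      · rintro ⟨h1, h2⟩; exact ⟨h1, by omega⟩)]
  exact count_fiber_some p _ hj

/-- fiber of `some k` is empty when `p - k > t` (and `k ≤ p`) -/
lemma fib_some_big {n t : ℕ} (p : Fin n) (k : ℕ) (hk : k ≤ (p:ℕ)) (hj : t < (p:ℕ) - k) :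
    (fib t p (some k)).card = 0 := by
  unfold fib
  rw [show (Finset.filter (fun S => keyOf p S = some k) (Finset.univ.powersetCard t))
      = (Finset.filter (fun S : Finset (Fin n) =>
          p ∉ S ∧ (S.filter (fun i => i < p)).card = (p:ℕ) - k) (Finset.univ.powersetCard t)) from
    Finset.filter_congr (fun S _ => by
      rw [keyOf_some_iff]
      have h := compl_filter_card p S
      constructor
      · rintro ⟨h1, h2⟩; exact ⟨h1, by omega⟩
      · rintro ⟨h1, h2⟩; exact ⟨h1, by omega⟩)]
  exact count_fiber_some_big p _ hj

/-- fiber of `some k` is empty when `k > p` -/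
lemma fib_some_gt {n t : ℕ} (p : Fin n) (k : ℕ) (hk : (p:ℕ) < k) :
    (fib t p (some k)).card = 0 := by
  unfold fib
  rw [Finset.card_eq_zero, Finset.filter_eq_empty_iff]
  intro S _ hS
  rw [keyOf_some_iff] at hS
  have := filter_le_card p S
  omega

lemma smin_eq (n t A B : ℕ) (hn : n = A+B+2) (ht : 1 ≤ t) (htn : t+1 ≤ n)
    (p1 p2 : Fin n) (hp1 : (p1:ℕ) = A) (hp2 : (p2:ℕ) = A+1) :
    ∑ o ∈ insert none ((Finset.range n).image some),
        min (fib t p1 o).card (fib t p2 o).card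
      = n.choose t - A.choose ((A+1)*(t+1)/n) * B.choose (t - (A+1)*(t+1)/n) := by
  rw [Finset.sum_insert (by simp)]
  rw [Finset.sum_image (fun a _ b _ h => Option.some_injective ℕ h)]
  -- none term
  have hnone : min (fib t p1 none).card (fib t p2 none).card = (n-1).choose (t-1) := by
    rw [fib_none p1 ht, fib_none p2 ht, min_self]
  -- restrict sum to range (A+2)
  have hzero : ∀ k ∈ Finset.range n, k ∉ Finset.range (A+2) →
      min (fib t p1 (some k)).card (fib t p2 (some k)).card = 0 := by
    intro k _ hk
    rw [Finset.mem_range] at hk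
    rw [fib_some_gt p1 k (by omega), Nat.min_eq_left (Nat.zero_le _)]
  have hsub : Finset.range (A+2) ⊆ Finset.range n := Finset.range_subset_range.mpr (by omega)
  rw [← Finset.sum_subset hsub (fun k hk1 hk2 => hzero k hk1 hk2)]
  -- reflect the sum
  rw [← Finset.sum_range_reflect (fun k => min (fib t p1 (some k)).card (fib t p2 (some k)).card) (A+2)]
  -- peel off the first term (j = 0, i.e. k = A+1)
  rw [Finset.sum_range_succ']
  have hfirst : min (fib t p1 (some (A + 2 - 1 - 0))).card (fib t p2 (some (A + 2 - 1 - 0))).card = 0 := by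
    have e : A + 2 - 1 - 0 = A + 1 := by omega
    rw [e, fib_some_gt p1 (A+1) (by omega), Nat.min_eq_left (Nat.zero_le _)]
  rw [hfirst, Nat.add_zero]
  -- identify remaining terms with min (Pseq ...) (Qseq ...)
  have hterm : ∀ j ∈ Finset.range (A+1),
      min (fib t p1 (some (A + 2 - 1 - (j+1)))).card (fib t p2 (some (A + 2 - 1 - (j+1)))).card
        = min (Pseq A B t j) (Qseq A B t j) := by
    intro j hj
    rw [Finset.mem_range] at hj
    have e : A + 2 - 1 - (j+1) = A - j := by omega
    rw [e]
    have hP : (fib t p1 (some (A - j))).card = Pseq A B t j := by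
      by_cases hjt : j ≤ t
      · rw [fib_some p1 (A-j) (by omega) (by omega)]
        unfold Pseq
        rw [if_pos hjt, hp1]
        have e1 : A - (A - j) = j := by omega
        have e2 : n - 1 - A = B + 1 := by omega
        rw [e1, e2]
      · rw [fib_some_big p1 (A-j) (by omega) (by omega)]
        unfold Pseq
        rw [if_neg hjt]
    have hQ : (fib t p2 (some (A - j))).card = Qseq A B t j := by
      by_cases hjt : j + 1 ≤ t
      · rw [fib_some p2 (A-j) (by omega) (by omega)]
        unfold Qseq
        rw [if_pos hjt, hp2]
        have e1 : A + 1 - (A - j) = j + 1 := by omega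
        have e2 : n - 1 - (A+1) = B := by omega
        have e3 : t - (j+1) = t - j - 1 := by omega
        rw [e1, e2, e3]
      · rw [fib_some_big p2 (A-j) (by omega) (by omega)]
        unfold Qseq
        rw [if_neg hjt]
    rw [hP, hQ]
  rw [Finset.sum_congr rfl hterm, hnone]
  have hfinal := min_sum_eq A B t ht (by omega)
  have e1 : n - 1 = A+B+1 := by omega
  have e2 : n = A+B+2 := hn
  rw [e1, hfinal, ← e2]


/-- For `x = 0^{a-1} 1 0^{n-a}` (single `1` at 0-indexed position `a - 1`) and
`x' = 0^{a} 1 0^{n-a-1}` (single `1` at position `a`), with `K = ⌊(at+a)/n⌋` and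
`M = C(n,t) - C(a-1,K)·C(n-a-1,t-K)`: exactly `M` channels with distinct deletion
vectors of weight exactly `t` can produce equal output multisets from `x` and `x'`
(so `M + 1` channels distinguish them in the multiset model, while `M` do not). -/
theorem multiset_model_exact_channel_number
    (t n a : ℕ) (ht : 1 ≤ t) (hn : t + 1 ≤ n) (ha1 : 1 ≤ a) (ha2 : a ≤ n - 1) :
    let x : Fin n → Fin 2 := fun i => if (i : ℕ) = a - 1 then 1 else 0
    let x' : Fin n → Fin 2 := fun i => if (i : ℕ) = a then 1 else 0
    let K := (a * t + a) / n
    let M := n.choose t - (a - 1).choose K * (n - a - 1).choose (t - K)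
    (∃ D D' : Finset (Finset (Fin n)),
      (∀ S ∈ D, S.card = t) ∧ (∀ S ∈ D', S.card = t) ∧
      D.card = M ∧ D'.card = M ∧
      Multiset.map (delWord x) D.val = Multiset.map (delWord x') D'.val) ∧
    (∀ D D' : Finset (Finset (Fin n)),
      (∀ S ∈ D, S.card = t) → (∀ S ∈ D', S.card = t) →
      D.card = D'.card →
      Multiset.map (delWord x) D.val = Multiset.map (delWord x') D'.val →
      D.card ≤ M) := by
  intro x x' K M
  obtain ⟨A, hA⟩ : ∃ A, a = A + 1 := ⟨a-1, by omega⟩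
  obtain ⟨B, hB⟩ : ∃ B, n = A + B + 2 := ⟨n - a - 1, by omega⟩
  have hAn : A < n := by omega
  have hA1n : A + 1 < n := by omega
  set p1 : Fin n := ⟨A, hAn⟩ with hp1def
  set p2 : Fin n := ⟨A+1, hA1n⟩ with hp2def
  have hp1v : (p1 : ℕ) = A := rfl
  have hp2v : (p2 : ℕ) = A + 1 := rfl
  -- identification of the words with indicator words
  have hiff1 : ∀ i : Fin n, ((i:ℕ) = a - 1) ↔ (i = p1) := by
    intro i
    rw [Fin.ext_iff, hp1v]
    omega
  have hiff2 : ∀ i : Fin n, ((i:ℕ) = a) ↔ (i = p2) := by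
    intro i
    rw [Fin.ext_iff, hp2v]
    omega
  have hxe : x = (fun i : Fin n => if i = p1 then (1:Fin 2) else 0) := by
    funext i
    show (if (i:ℕ) = a - 1 then (1:Fin 2) else 0) = (if i = p1 then (1:Fin 2) else 0)
    exact if_congr (hiff1 i) rfl rfl
  have hxe' : x' = (fun i : Fin n => if i = p2 then (1:Fin 2) else 0) := by
    funext i
    show (if (i:ℕ) = a then (1:Fin 2) else 0) = (if i = p2 then (1:Fin 2) else 0)
    exact if_congr (hiff2 i) rfl rfl
  -- the multiset of outputs factors through keys
  have hmapx : ∀ D : Finset (Finset (Fin n)), (∀ S ∈ D, S.card = t) →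
      Multiset.map (delWord x) D.val
        = Multiset.map (Fenc n t) (Multiset.map (keyOf p1) D.val) := by
    intro D hD
    rw [Multiset.map_map]
    apply Multiset.map_congr rfl
    intro S hS
    rw [hxe]
    exact delWord_ind p1 S (hD S hS)
  have hmapx' : ∀ D : Finset (Finset (Fin n)), (∀ S ∈ D, S.card = t) →
      Multiset.map (delWord x') D.val
        = Multiset.map (Fenc n t) (Multiset.map (keyOf p2) D.val) := by
    intro D hD
    rw [Multiset.map_map]
    apply Multiset.map_congr rfl
    intro S hS
    rw [hxe']
    exact delWord_ind p2 S (hD S hS)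
  -- key set
  set Kset : Finset (Option ℕ) := insert none ((Finset.range n).image some) with hKset
  have hKsetmem : ∀ (p : Fin n) (S : Finset (Fin n)), keyOf p S ∈ Kset := by
    intro p S
    rcases hk : keyOf p S with _ | k
    · exact Finset.mem_insert_self _ _
    · apply Finset.mem_insert_of_mem
      apply Finset.mem_image_of_mem
      rw [keyOf_some_iff] at hk
      have h1 := filter_le_card p S
      rw [Finset.mem_range]
      have : (p : ℕ) < n := p.isLt
      omega
  -- M equals the min-sum
  have hMval : M = n.choose t - A.choose ((A+1)*(t+1)/n) * B.choose (t - (A+1)*(t+1)/n) := by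
    show n.choose t - (a - 1).choose ((a * t + a) / n) * (n - a - 1).choose (t - (a * t + a) / n) = _
    have e1 : a * t + a = (A+1)*(t+1) := by rw [hA]; ring
    have e2 : a - 1 = A := by omega
    have e3 : n - a - 1 = B := by omega
    rw [e1, e2, e3]
  have hsmin := smin_eq n t A B hB ht hn p1 p2 hp1v hp2v
  rw [← hKset] at hsmin
  -- fiber counting identity
  have hfibcount : ∀ (E : Finset (Finset (Fin n))) (p : Fin n) (o : Option ℕ),
      (E.filter (fun S => keyOf p S = o)).card
        = Multiset.count o (Multiset.map (keyOf p) E.val) := by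
    intro E p o
    rw [Multiset.count_map]
    show Multiset.card (Finset.filter (fun S => keyOf p S = o) E).val = _
    rw [Finset.filter_val]
    congr 1
    apply Multiset.filter_congr
    intro S _
    exact eq_comm
  have hfibsub : ∀ (E : Finset (Finset (Fin n))), (∀ S ∈ E, S.card = t) →
      ∀ (p : Fin n) (o : Option ℕ),
      (E.filter (fun S => keyOf p S = o)).card ≤ (fib t p o).card := by
    intro E hE p o
    apply Finset.card_le_card
    intro S hS
    rw [Finset.mem_filter] at hS
    unfold fib
    rw [Finset.mem_filter, Finset.mem_powersetCard]
    exact ⟨⟨Finset.subset_univ _, hE S hS.1⟩, hS.2⟩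
  constructor
  · -- construction
    have h1 : ∀ o : Option ℕ, ∃ E, E ⊆ fib t p1 o ∧
        E.card = min (fib t p1 o).card (fib t p2 o).card :=
      fun o => Finset.exists_subset_card_eq (Nat.min_le_left _ _)
    have h2 : ∀ o : Option ℕ, ∃ E, E ⊆ fib t p2 o ∧
        E.card = min (fib t p1 o).card (fib t p2 o).card :=
      fun o => Finset.exists_subset_card_eq (Nat.min_le_right _ _)
    choose E1 hE1sub hE1card using h1
    choose E2 hE2sub hE2card using h2
    have hkey1 : ∀ o, ∀ S ∈ E1 o, keyOf p1 S = o := by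
      intro o S hS
      have := hE1sub o hS
      unfold fib at this
      rw [Finset.mem_filter] at this
      exact this.2
    have hkey2 : ∀ o, ∀ S ∈ E2 o, keyOf p2 S = o := by
      intro o S hS
      have := hE2sub o hS
      unfold fib at this
      rw [Finset.mem_filter] at this
      exact this.2
    have hdisj1 : (↑Kset : Set (Option ℕ)).PairwiseDisjoint E1 := by
      intro o _ o' _ hne
      apply Finset.disjoint_left.mpr
      intro S hS hS'
      exact hne ((hkey1 o S hS) ▸ (hkey1 o' S hS'))
    have hdisj2 : (↑Kset : Set (Option ℕ)).PairwiseDisjoint E2 := by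
      intro o _ o' _ hne
      apply Finset.disjoint_left.mpr
      intro S hS hS'
      exact hne ((hkey2 o S hS) ▸ (hkey2 o' S hS'))
    refine ⟨Kset.disjiUnion E1 hdisj1, Kset.disjiUnion E2 hdisj2, ?_, ?_, ?_, ?_, ?_⟩
    · intro S hS
      rw [Finset.mem_disjiUnion] at hS
      obtain ⟨o, _, hSo⟩ := hS
      have := hE1sub o hSo
      unfold fib at this
      rw [Finset.mem_filter, Finset.mem_powersetCard] at this
      exact this.1.2
    · intro S hS
      rw [Finset.mem_disjiUnion] at hS
      obtain ⟨o, _, hSo⟩ := hS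
      have := hE2sub o hSo
      unfold fib at this
      rw [Finset.mem_filter, Finset.mem_powersetCard] at this
      exact this.1.2
    · rw [Finset.card_disjiUnion, Finset.sum_congr rfl (fun o _ => hE1card o), hsmin, hMval]
    · rw [Finset.card_disjiUnion, Finset.sum_congr rfl (fun o _ => hE2card o), hsmin, hMval]
    · have hDt : ∀ S ∈ Kset.disjiUnion E1 hdisj1, S.card = t := by
        intro S hS
        rw [Finset.mem_disjiUnion] at hS
        obtain ⟨o, _, hSo⟩ := hS
        have := hE1sub o hSo
        unfold fib at this
        rw [Finset.mem_filter, Finset.mem_powersetCard] at this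
        exact this.1.2
      have hD't : ∀ S ∈ Kset.disjiUnion E2 hdisj2, S.card = t := by
        intro S hS
        rw [Finset.mem_disjiUnion] at hS
        obtain ⟨o, _, hSo⟩ := hS
        have := hE2sub o hSo
        unfold fib at this
        rw [Finset.mem_filter, Finset.mem_powersetCard] at this
        exact this.1.2
      rw [hmapx _ hDt, hmapx' _ hD't]
      congr 1
      rw [Finset.disjiUnion_val, Finset.disjiUnion_val, Multiset.map_bind, Multiset.map_bind]
      apply Multiset.bind_congr
      intro o ho
      have hrep1 : Multiset.map (keyOf p1) (E1 o).val
          = Multiset.replicate (min (fib t p1 o).card (fib t p2 o).card) o := by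
        rw [Multiset.eq_replicate]
        constructor
        · rw [Multiset.card_map]
          exact hE1card o
        · intro b hb
          rw [Multiset.mem_map] at hb
          obtain ⟨S, hS, hSb⟩ := hb
          rw [← hSb]
          exact hkey1 o S hS
      have hrep2 : Multiset.map (keyOf p2) (E2 o).val
          = Multiset.replicate (min (fib t p1 o).card (fib t p2 o).card) o := by
        rw [Multiset.eq_replicate]
        constructor
        · rw [Multiset.card_map]
          exact hE2card o
        · intro b hb
          rw [Multiset.mem_map] at hb
          obtain ⟨S, hS, hSb⟩ := hb
          rw [← hSb]
          exact hkey2 o S hS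
      rw [hrep1, hrep2]
  · -- upper bound
    intro D D' hD hD' hcard hmul
    rw [hmapx D hD, hmapx' D' hD'] at hmul
    have hkey : Multiset.map (keyOf p1) D.val = Multiset.map (keyOf p2) D'.val :=
      Multiset.map_injective (Fenc_inj n t) hmul
    have hDsum : D.card = ∑ o ∈ Kset, (D.filter (fun S => keyOf p1 S = o)).card :=
      Finset.card_eq_sum_card_fiberwise (fun S _ => hKsetmem p1 S)
    rw [hDsum, hMval, ← hsmin]
    apply Finset.sum_le_sum
    intro o _
    apply le_min
    · exact hfibsub D hD p1 o
    · calc (D.filter (fun S => keyOf p1 S = o)).card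
          = Multiset.count o (Multiset.map (keyOf p1) D.val) := hfibcount D p1 o
        _ = Multiset.count o (Multiset.map (keyOf p2) D'.val) := by rw [hkey]
        _ = (D'.filter (fun S => keyOf p2 S = o)).card := (hfibcount D' p2 o).symm
        _ ≤ (fib t p2 o).card := hfibsub D' hD' p2 o
end
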